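/- arXiv:1912.13225 — 7 statements merged into one kernel-verified Lean document; each statement's English description precedes it below -/
import Mathlib

section
/- (Fictitious Space Lemma) Let H and H_D be finite-dimensional real inner product spaces, A : H → H and B : H_D → H_D self-adjoint positive definite linear operators, and R : H_D → H a linear operator such that: (i) R is surjective; (ii) there is c_R > 0 with ⟨A(R u_D), R u_D⟩ ≤ c_R ⟨B u_D, u_D⟩ for all u_D ∈ H_D; (iii) there is c_T > 0 such that for every u ∈ H there exists u_D ∈ H_D with R u_D = u and c_T ⟨B u_D, u_D⟩ ≤ ⟨A u, u⟩. Let R* : H → H_D denote the adjoint of R. Then for all u ∈ H, c_T ⟨A u, u⟩ ≤ ⟨A (R B⁻¹ R* A u), u⟩ ≤ c_R ⟨A u, u⟩; in particular all eigenvalues of R B⁻¹ R* A lie in the interval [c_T, c_R]. -/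
open RealInnerProductSpace

/-- Cauchy–Schwarz for a positive semidefinite symmetric operator. -/
lemma cs_aux {H : Type*} [NormedAddCommGroup H] [InnerProductSpace ℝ H]
    (A : H →ₗ[ℝ] H) (hAsym : ∀ x y : H, ⟪A x, y⟫ = ⟪x, A y⟫)
    (hApos : ∀ x : H, 0 ≤ ⟪A x, x⟫) (x y : H) :
    ⟪A x, y⟫ ^ 2 ≤ ⟪A x, x⟫ * ⟪A y, y⟫ := by
  have key : ∀ t : ℝ, 0 ≤ ⟪A y, y⟫ * (t * t) + (2 * ⟪A x, y⟫) * t + ⟪A x, x⟫ := by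
    intro t
    have h := hApos (x + t • y)
    have hyx : ⟪A y, x⟫ = ⟪A x, y⟫ := by
      rw [hAsym y x, real_inner_comm]
    simp only [map_add, map_smul, inner_add_left, inner_add_right,
      real_inner_smul_left, real_inner_smul_right, hyx] at h
    nlinarith [h]
  have hd := discrim_le_zero key
  rw [discrim] at hd
  nlinarith [hd]

/-- Fictitious Space Lemma: Let `H`, `H_D` be finite-dimensional real inner
product spaces, `A : H → H` and `B : H_D → H_D` self-adjoint positive definite linear
operators (with `Binv` the inverse of `B`), and `R : H_D → H` a surjective linear operator
satisfying the continuity estimate with constant `c_R` and the stable decomposition property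
with constant `c_T`. Then for all `u`,
`c_T ⟨A u, u⟩ ≤ ⟨A (R B⁻¹ R* A u), u⟩ ≤ c_R ⟨A u, u⟩`, and in particular every eigenvalue
of `R B⁻¹ R* A` lies in `[c_T, c_R]`. -/
theorem stmt2 {H HD : Type*}
    [NormedAddCommGroup H] [InnerProductSpace ℝ H] [FiniteDimensional ℝ H]
    [NormedAddCommGroup HD] [InnerProductSpace ℝ HD] [FiniteDimensional ℝ HD]
    (A : H →ₗ[ℝ] H) (B Binv : HD →ₗ[ℝ] HD)
    (hAsym : ∀ x y : H, ⟪A x, y⟫ = ⟪x, A y⟫)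
    (hApos : ∀ x : H, x ≠ 0 → 0 < ⟪A x, x⟫)
    (hBsym : ∀ x y : HD, ⟪B x, y⟫ = ⟪x, B y⟫)
    (hBpos : ∀ x : HD, x ≠ 0 → 0 < ⟪B x, x⟫)
    (hBinv₁ : ∀ x : HD, Binv (B x) = x) (hBinv₂ : ∀ x : HD, B (Binv x) = x)
    (R : HD →ₗ[ℝ] H) (hRsurj : Function.Surjective R)
    (cR cT : ℝ) (hcR : 0 < cR) (hcT : 0 < cT)
    (hcont : ∀ uD : HD, ⟪A (R uD), R uD⟫ ≤ cR * ⟪B uD, uD⟫)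
    (hstable : ∀ u : H, ∃ uD : HD, R uD = u ∧ cT * ⟪B uD, uD⟫ ≤ ⟪A u, u⟫) :
    (∀ u : H,
        cT * ⟪A u, u⟫ ≤ ⟪A (R (Binv (LinearMap.adjoint R (A u)))), u⟫ ∧
        ⟪A (R (Binv (LinearMap.adjoint R (A u)))), u⟫ ≤ cR * ⟪A u, u⟫) ∧
    (∀ (lam : ℝ) (u : H), u ≠ 0 →
        R (Binv (LinearMap.adjoint R (A u))) = lam • u → cT ≤ lam ∧ lam ≤ cR) := by
  have hApos' : ∀ x : H, 0 ≤ ⟪A x, x⟫ := by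
    intro x
    rcases eq_or_ne x 0 with rfl | hx
    · simp
    · exact (hApos x hx).le
  have hBpos' : ∀ x : HD, 0 ≤ ⟪B x, x⟫ := by
    intro x
    rcases eq_or_ne x 0 with rfl | hx
    · simp
    · exact (hBpos x hx).le
  have main : ∀ u : H,
      cT * ⟪A u, u⟫ ≤ ⟪A (R (Binv (LinearMap.adjoint R (A u)))), u⟫ ∧
      ⟪A (R (Binv (LinearMap.adjoint R (A u)))), u⟫ ≤ cR * ⟪A u, u⟫ := by
    intro u
    set v : HD := Binv (LinearMap.adjoint R (A u)) with hv
    have hBv : B v = LinearMap.adjoint R (A u) := hBinv₂ _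
    -- key identity: ⟪A (R v), u⟫ = ⟪B v, v⟫
    have key : ⟪A (R v), u⟫ = ⟪B v, v⟫ := by
      calc ⟪A (R v), u⟫ = ⟪R v, A u⟫ := hAsym _ _
        _ = ⟪v, LinearMap.adjoint R (A u)⟫ := (LinearMap.adjoint_inner_right R v (A u)).symm
        _ = ⟪v, B v⟫ := by rw [hBv]
        _ = ⟪B v, v⟫ := (real_inner_comm _ _)
    have hsnn : (0:ℝ) ≤ ⟪B v, v⟫ := hBpos' v
    have hqnn : (0:ℝ) ≤ ⟪A u, u⟫ := hApos' u
    rw [key]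
    constructor
    · -- lower bound
      obtain ⟨uD, hRuD, hst⟩ := hstable u
      have h1 : ⟪A u, u⟫ = ⟪B v, uD⟫ := by
        calc ⟪A u, u⟫ = ⟪A u, R uD⟫ := by rw [hRuD]
          _ = ⟪R uD, A u⟫ := real_inner_comm _ _
          _ = ⟪uD, LinearMap.adjoint R (A u)⟫ := (LinearMap.adjoint_inner_right R uD (A u)).symm
          _ = ⟪uD, B v⟫ := by rw [hBv]
          _ = ⟪B v, uD⟫ := real_inner_comm _ _
      have hcs : ⟪B v, uD⟫ ^ 2 ≤ ⟪B v, v⟫ * ⟪B uD, uD⟫ := cs_aux B hBsym hBpos' v uD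
      rw [← h1] at hcs
      -- from q² ≤ s·t and cT·t ≤ q with q,s ≥ 0 deduce cT·q ≤ s
      nlinarith [mul_le_mul_of_nonneg_left hst hsnn,
        mul_le_mul_of_nonneg_left hcs hcT.le, hsnn, hqnn, hcT]
    · -- upper bound
      have hcs : ⟪A (R v), u⟫ ^ 2 ≤ ⟪A (R v), R v⟫ * ⟪A u, u⟫ := cs_aux A hAsym hApos' (R v) u
      have hc := hcont v
      rw [key] at hcs
      nlinarith [hcs, mul_le_mul_of_nonneg_right hc hqnn, hsnn, hqnn, hcR,
        hApos' (R v), mul_nonneg hcR.le hqnn]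
  refine ⟨main, fun lam u hu heig => ?_⟩
  have hq : 0 < ⟪A u, u⟫ := hApos u hu
  have h := main u
  rw [heig] at h
  have hsc : ⟪A (lam • u), u⟫ = lam * ⟪A u, u⟫ := by
    rw [map_smul, real_inner_smul_left]
  rw [hsc] at h
  exact ⟨le_of_mul_le_mul_right (by linarith [h.1]) hq,
    le_of_mul_le_mul_right (by linarith [h.2]) hq⟩
end

section
/- (Continuity estimate for the GenEO preconditioner with inexact coarse solve) Assume: ‖∑_{i=1}^N R_iᵀ U_i‖_A² ≤ k₀ ∑_{i=1}^N ‖R_iᵀ U_i‖_A² for all U_i ∈ ℝ^{n_i}; and ⟨E u, u⟩ ≤ μ ⟨Ẽ u, u⟩ for all u ∈ ℝᵐ for some μ > 0. Let ε_A := ‖P₀ − P̃₀‖_A and c_R := [ k₀ (1 + ε_A²) + μ + √( (k₀ (1 + ε_A²) − μ)² + 4 μ k₀ ε_A² ) ] / 2. Then for all U₀ ∈ ℝᵐ and all U_i ∈ ℝ^{n_i} (i = 1,…,N): ‖Z U₀ + (I − P̃₀) ∑_{i=1}^N R_iᵀ U_i‖_A² ≤ c_R ( ⟨Ẽ U₀,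 U₀⟩ + ∑_{i=1}^N ⟨R_i A R_iᵀ U_i, U_i⟩ ). -/
open Matrix

/-- The norm induced by an SPD matrix `A`: `‖x‖_A = √(⟨A x, x⟩)`. -/
noncomputable def aNorm {n : ℕ} (A : Matrix (Fin n) (Fin n) ℝ) (x : Fin n → ℝ) : ℝ :=
  Real.sqrt ((A *ᵥ x) ⬝ᵥ x)

/-- The operator norm of a matrix `M` induced by the `A`-norm. -/
noncomputable def aOpNorm {n : ℕ} (A M : Matrix (Fin n) (Fin n) ℝ) : ℝ :=
  sSup { t : ℝ | ∃ x : Fin n → ℝ, x ≠ 0 ∧ t = aNorm A (M *ᵥ x) / aNorm A x }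

lemma ipNonneg {n : ℕ} {A : Matrix (Fin n) (Fin n) ℝ} (hA : A.PosSemidef) (x : Fin n → ℝ) :
    0 ≤ (A *ᵥ x) ⬝ᵥ x := by simpa [dotProduct_comm] using hA.dotProduct_mulVec_nonneg x

lemma ipSymm {n : ℕ} {A : Matrix (Fin n) (Fin n) ℝ} (hs : Aᵀ = A) (x y : Fin n → ℝ) :
    (A *ᵥ x) ⬝ᵥ y = (A *ᵥ y) ⬝ᵥ x := by
  rw [dotProduct_comm, dotProduct_mulVec, ← mulVec_transpose, hs]

lemma ipCS {n : ℕ} {A : Matrix (Fin n) (Fin n) ℝ} (hA : A.PosSemidef) (x y : Fin n → ℝ) :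
    ((A *ᵥ x) ⬝ᵥ y) ^ 2 ≤ ((A *ᵥ x) ⬝ᵥ x) * ((A *ᵥ y) ⬝ᵥ y) := by
  have hs : Aᵀ = A := by have := hA.1.eq; rwa [conjTranspose_eq_transpose_of_trivial] at this
  have h : ∀ t : ℝ, 0 ≤ ((A *ᵥ y) ⬝ᵥ y) * (t * t) + (2 * ((A *ᵥ x) ⬝ᵥ y)) * t
      + ((A *ᵥ x) ⬝ᵥ x) := by
    intro t
    have h0 := ipNonneg hA (x + t • y)
    have hsym := ipSymm hs x y
    simp only [mulVec_add, mulVec_smul, dotProduct_add, add_dotProduct, smul_dotProduct,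
      dotProduct_smul, smul_eq_mul] at h0
    rw [hsym] at h0 ⊢
    ring_nf at h0 ⊢
    linarith [h0]
  have hd := discrim_le_zero h
  rw [discrim] at hd
  nlinarith [hd]



lemma aNorm_nonneg {n : ℕ} (A : Matrix (Fin n) (Fin n) ℝ) (x : Fin n → ℝ) :
    0 ≤ aNorm A x := Real.sqrt_nonneg _

lemma sq_aNorm {n : ℕ} {A : Matrix (Fin n) (Fin n) ℝ} (hA : A.PosSemidef) (x : Fin n → ℝ) :
    aNorm A x ^ 2 = (A *ᵥ x) ⬝ᵥ x := Real.sq_sqrt (ipNonneg hA x)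

lemma ip_le_aNorm_mul {n : ℕ} {A : Matrix (Fin n) (Fin n) ℝ} (hA : A.PosSemidef)
    (x y : Fin n → ℝ) : (A *ᵥ x) ⬝ᵥ y ≤ aNorm A x * aNorm A y := by
  have h := ipCS hA x y
  have hx := sq_aNorm hA x
  have hy := sq_aNorm hA y
  have h1 : ((A *ᵥ x) ⬝ᵥ y) ^ 2 ≤ (aNorm A x * aNorm A y) ^ 2 := by
    rw [mul_pow, hx, hy]; exact h
  have h2 : 0 ≤ aNorm A x * aNorm A y :=
    mul_nonneg (aNorm_nonneg A x) (aNorm_nonneg A y)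
  nlinarith [h1, h2]

lemma aNorm_add_le {n : ℕ} {A : Matrix (Fin n) (Fin n) ℝ} (hA : A.PosSemidef)
    (x y : Fin n → ℝ) : aNorm A (x + y) ≤ aNorm A x + aNorm A y := by
  have key : (A *ᵥ (x + y)) ⬝ᵥ (x + y) ≤ (aNorm A x + aNorm A y) ^ 2 := by
    have hs : Aᵀ = A := by have := hA.1.eq; rwa [conjTranspose_eq_transpose_of_trivial] at this
    have hsym := ipSymm hs x y
    have hcs := ip_le_aNorm_mul hA x y
    have hx := sq_aNorm hA x
    have hy := sq_aNorm hA y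
    simp only [mulVec_add, dotProduct_add, add_dotProduct]
    nlinarith [hcs, hx, hy]
  calc aNorm A (x + y) = Real.sqrt ((A *ᵥ (x + y)) ⬝ᵥ (x + y)) := rfl
    _ ≤ Real.sqrt ((aNorm A x + aNorm A y) ^ 2) := Real.sqrt_le_sqrt key
    _ = aNorm A x + aNorm A y := Real.sqrt_sq (add_nonneg (aNorm_nonneg A x) (aNorm_nonneg A y))

/-- Frobenius-type bound: `(M *ᵥ x) ⬝ᵥ (M *ᵥ x) ≤ (∑∑ M i j ^ 2) * (x ⬝ᵥ x)`. -/
lemma mulVec_dot_le {n m : ℕ} (M : Matrix (Fin n) (Fin m) ℝ) (x : Fin m → ℝ) :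
    (M *ᵥ x) ⬝ᵥ (M *ᵥ x) ≤ (∑ i, ∑ j, M i j ^ 2) * (x ⬝ᵥ x) := by
  have hx : x ⬝ᵥ x = ∑ j, x j ^ 2 := by simp [dotProduct, sq]
  have h1 : (M *ᵥ x) ⬝ᵥ (M *ᵥ x) = ∑ i, (∑ j, M i j * x j) ^ 2 := by
    simp [dotProduct, mulVec, sq]
  rw [h1, hx, Finset.sum_mul]
  refine Finset.sum_le_sum fun i _ => ?_
  exact Finset.sum_mul_sq_le_sq_mul_sq _ _ _

/-- Any quadratic form value is bounded: `(B *ᵥ v) ⬝ᵥ v ≤ √(∑∑ B²) * (v ⬝ᵥ v)`. -/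
lemma quad_le {n : ℕ} (B : Matrix (Fin n) (Fin n) ℝ) (v : Fin n → ℝ) :
    (B *ᵥ v) ⬝ᵥ v ≤ Real.sqrt (∑ i, ∑ j, B i j ^ 2) * (v ⬝ᵥ v) := by
  have hcs : ((B *ᵥ v) ⬝ᵥ v) ^ 2 ≤ ((B *ᵥ v) ⬝ᵥ (B *ᵥ v)) * (v ⬝ᵥ v) := by
    have := Finset.sum_mul_sq_le_sq_mul_sq Finset.univ (fun i => (B *ᵥ v) i) (fun i => v i)
    simpa [dotProduct, sq] using this
  have h2 := mulVec_dot_le B v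
  have hvv : 0 ≤ v ⬝ᵥ v := by
    simp only [dotProduct]
    exact Finset.sum_nonneg fun i _ => mul_self_nonneg _
  have hF : 0 ≤ ∑ i, ∑ j, B i j ^ 2 :=
    Finset.sum_nonneg fun i _ => Finset.sum_nonneg fun j _ => sq_nonneg _
  have hsq : ((B *ᵥ v) ⬝ᵥ v) ^ 2 ≤ (Real.sqrt (∑ i, ∑ j, B i j ^ 2) * (v ⬝ᵥ v)) ^ 2 := by
    have : (Real.sqrt (∑ i, ∑ j, B i j ^ 2)) ^ 2 = ∑ i, ∑ j, B i j ^ 2 := Real.sq_sqrt hF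
    calc ((B *ᵥ v) ⬝ᵥ v) ^ 2 ≤ ((B *ᵥ v) ⬝ᵥ (B *ᵥ v)) * (v ⬝ᵥ v) := hcs
      _ ≤ ((∑ i, ∑ j, B i j ^ 2) * (v ⬝ᵥ v)) * (v ⬝ᵥ v) := by nlinarith [h2, hvv]
      _ = (Real.sqrt (∑ i, ∑ j, B i j ^ 2) * (v ⬝ᵥ v)) ^ 2 := by rw [mul_pow, this]; ring
  nlinarith [hsq, Real.sqrt_nonneg (∑ i, ∑ j, B i j ^ 2), hvv,
    mul_nonneg (Real.sqrt_nonneg (∑ i, ∑ j, B i j ^ 2)) hvv]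

/-- Lower bound: the Euclidean norm squared is controlled by the `A`-quadratic form. -/
lemma dot_le_quad {n : ℕ} {A : Matrix (Fin n) (Fin n) ℝ} (hA : A.PosDef) (v : Fin n → ℝ) :
    v ⬝ᵥ v ≤ Real.sqrt (∑ i, ∑ j, A⁻¹ i j ^ 2) * ((A *ᵥ v) ⬝ᵥ v) := by
  have hs : Aᵀ = A := by have := hA.1.eq; rwa [conjTranspose_eq_transpose_of_trivial] at this
  have hdet : IsUnit A.det := isUnit_iff_isUnit_det _ |>.1 hA.isUnit
  have hAiA : A⁻¹ * A = 1 := nonsing_inv_mul A hdet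
  have hAAi : A * A⁻¹ = 1 := mul_nonsing_inv A hdet
  have hst : (A⁻¹)ᵀ = A⁻¹ := by rw [transpose_nonsing_inv, hs]
  have h1 : v ⬝ᵥ v = (A *ᵥ v) ⬝ᵥ (A⁻¹ *ᵥ v) := by
    rw [Matrix.dotProduct_mulVec, ← Matrix.mulVec_transpose, hst, mulVec_mulVec, hAiA,
      one_mulVec]
  have hAAiv : A *ᵥ (A⁻¹ *ᵥ v) = v := by rw [mulVec_mulVec, hAAi, one_mulVec]
  have h2 : (v ⬝ᵥ v) ^ 2 ≤ ((A *ᵥ v) ⬝ᵥ v) * ((A⁻¹ *ᵥ v) ⬝ᵥ v) := by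
    have := ipCS hA.posSemidef v (A⁻¹ *ᵥ v)
    rw [hAAiv] at this
    rw [h1]
    calc ((A *ᵥ v) ⬝ᵥ (A⁻¹ *ᵥ v)) ^ 2 ≤ ((A *ᵥ v) ⬝ᵥ v) * (v ⬝ᵥ (A⁻¹ *ᵥ v)) := this
      _ = ((A *ᵥ v) ⬝ᵥ v) * ((A⁻¹ *ᵥ v) ⬝ᵥ v) := by rw [dotProduct_comm v (A⁻¹ *ᵥ v)]
  have h3 : (A⁻¹ *ᵥ v) ⬝ᵥ v ≤ Real.sqrt (∑ i, ∑ j, A⁻¹ i j ^ 2) * (v ⬝ᵥ v) := quad_le A⁻¹ v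
  have hq : 0 ≤ (A *ᵥ v) ⬝ᵥ v := ipNonneg hA.posSemidef v
  have hvv : 0 ≤ v ⬝ᵥ v := by
    simp only [dotProduct]
    exact Finset.sum_nonneg fun i _ => mul_self_nonneg _
  have hc : 0 ≤ Real.sqrt (∑ i, ∑ j, A⁻¹ i j ^ 2) := Real.sqrt_nonneg _
  rcases eq_or_lt_of_le hvv with h0 | h0
  · rw [← h0]; exact mul_nonneg hc hq
  · nlinarith [h2, h3, h0, hq, hc]

lemma aNorm_pos {n : ℕ} {A : Matrix (Fin n) (Fin n) ℝ} (hA : A.PosDef) {x : Fin n → ℝ}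
    (hx : x ≠ 0) : 0 < aNorm A x := by
  have := hA.dotProduct_mulVec_pos hx
  rw [aNorm, Real.sqrt_pos]
  simpa [dotProduct_comm] using this

lemma aNorm_zero {n : ℕ} (A : Matrix (Fin n) (Fin n) ℝ) : aNorm A (0 : Fin n → ℝ) = 0 := by
  simp [aNorm]

lemma aOpNorm_spec {n : ℕ} {A : Matrix (Fin n) (Fin n) ℝ} (hA : A.PosDef)
    (M : Matrix (Fin n) (Fin n) ℝ) :
    (∀ x, aNorm A (M *ᵥ x) ≤ aOpNorm A M * aNorm A x) ∧ 0 ≤ aOpNorm A M := by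
  set cA := Real.sqrt (∑ i, ∑ j, A i j ^ 2) with hcA
  set cI := Real.sqrt (∑ i, ∑ j, A⁻¹ i j ^ 2) with hcI
  set cM := ∑ i, ∑ j, M i j ^ 2 with hcM
  have hcA0 : 0 ≤ cA := Real.sqrt_nonneg _
  have hcI0 : 0 ≤ cI := Real.sqrt_nonneg _
  have hcM0 : 0 ≤ cM :=
    Finset.sum_nonneg fun i _ => Finset.sum_nonneg fun j _ => sq_nonneg _
  set K := Real.sqrt (cA * cM * cI) with hK
  have hK0 : 0 ≤ K := Real.sqrt_nonneg _
  have hKsq : K ^ 2 = cA * cM * cI := Real.sq_sqrt (by positivity)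
  -- uniform bound : aNorm A (M *ᵥ x) ≤ K * aNorm A x
  have hbound : ∀ x : Fin n → ℝ, aNorm A (M *ᵥ x) ≤ K * aNorm A x := by
    intro x
    have hq : 0 ≤ (A *ᵥ x) ⬝ᵥ x := ipNonneg hA.posSemidef x
    have hMx : 0 ≤ (M *ᵥ x) ⬝ᵥ (M *ᵥ x) := by
      simp only [dotProduct]
      exact Finset.sum_nonneg fun i _ => mul_self_nonneg _
    have hxx : 0 ≤ x ⬝ᵥ x := by
      simp only [dotProduct]
      exact Finset.sum_nonneg fun i _ => mul_self_nonneg _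
    have e1 : (A *ᵥ (M *ᵥ x)) ⬝ᵥ (M *ᵥ x) ≤ cA * ((M *ᵥ x) ⬝ᵥ (M *ᵥ x)) := quad_le A _
    have e2 : (M *ᵥ x) ⬝ᵥ (M *ᵥ x) ≤ cM * (x ⬝ᵥ x) := mulVec_dot_le M x
    have e3 : x ⬝ᵥ x ≤ cI * ((A *ᵥ x) ⬝ᵥ x) := dot_le_quad hA x
    have echain : (A *ᵥ (M *ᵥ x)) ⬝ᵥ (M *ᵥ x) ≤ (cA * cM * cI) * ((A *ᵥ x) ⬝ᵥ x) :=
      calc (A *ᵥ (M *ᵥ x)) ⬝ᵥ (M *ᵥ x) ≤ cA * ((M *ᵥ x) ⬝ᵥ (M *ᵥ x)) := e1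
        _ ≤ cA * (cM * (x ⬝ᵥ x)) := mul_le_mul_of_nonneg_left e2 hcA0
        _ ≤ cA * (cM * (cI * ((A *ᵥ x) ⬝ᵥ x))) :=
            mul_le_mul_of_nonneg_left (mul_le_mul_of_nonneg_left e3 hcM0) hcA0
        _ = (cA * cM * cI) * ((A *ᵥ x) ⬝ᵥ x) := by ring
    have : aNorm A (M *ᵥ x) ≤ Real.sqrt ((K * aNorm A x) ^ 2) := by
      apply Real.sqrt_le_sqrt
      calc (A *ᵥ (M *ᵥ x)) ⬝ᵥ (M *ᵥ x) ≤ (cA * cM * cI) * ((A *ᵥ x) ⬝ᵥ x) := echain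
        _ = (K * aNorm A x) ^ 2 := by
          rw [mul_pow, hKsq, sq_aNorm hA.posSemidef]
    calc aNorm A (M *ᵥ x) ≤ Real.sqrt ((K * aNorm A x) ^ 2) := this
      _ = K * aNorm A x := Real.sqrt_sq (mul_nonneg hK0 (aNorm_nonneg A x))
  -- boundedness of the ratio set
  have hbdd : BddAbove { t : ℝ | ∃ x : Fin n → ℝ, x ≠ 0 ∧ t = aNorm A (M *ᵥ x) / aNorm A x } := by
    refine ⟨K, fun t ht => ?_⟩
    obtain ⟨x, hx, rfl⟩ := ht
    have hpos := aNorm_pos hA hx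
    rw [div_le_iff₀ hpos]
    exact hbound x
  constructor
  · intro x
    by_cases hx : x = 0
    · subst hx
      rw [Matrix.mulVec_zero, aNorm_zero]
      simp
    · have hmem : aNorm A (M *ᵥ x) / aNorm A x ∈
          { t : ℝ | ∃ x : Fin n → ℝ, x ≠ 0 ∧ t = aNorm A (M *ᵥ x) / aNorm A x } :=
        ⟨x, hx, rfl⟩
      have hle := le_csSup hbdd hmem
      have hpos := aNorm_pos hA hx
      have : aNorm A (M *ᵥ x) = aNorm A (M *ᵥ x) / aNorm A x * aNorm A x := by
        field_simp
      rw [aOpNorm]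
      rw [this]
      exact mul_le_mul_of_nonneg_right hle hpos.le
  · by_cases hex : ∃ x : Fin n → ℝ, x ≠ 0
    · obtain ⟨x, hx⟩ := hex
      have hmem : aNorm A (M *ᵥ x) / aNorm A x ∈
          { t : ℝ | ∃ x : Fin n → ℝ, x ≠ 0 ∧ t = aNorm A (M *ᵥ x) / aNorm A x } :=
        ⟨x, hx, rfl⟩
      have h0 : (0 : ℝ) ≤ aNorm A (M *ᵥ x) / aNorm A x :=
        div_nonneg (aNorm_nonneg _ _) (aNorm_nonneg _ _)
      exact h0.trans (le_csSup hbdd hmem)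
    · have hempty : { t : ℝ | ∃ x : Fin n → ℝ, x ≠ 0 ∧ t = aNorm A (M *ᵥ x) / aNorm A x }
          = ∅ := by
        ext t
        simp only [Set.mem_setOf_eq, Set.mem_empty_iff_false, iff_false]
        rintro ⟨x, hx, -⟩
        exact hex ⟨x, hx⟩
      rw [aOpNorm, hempty, Real.sSup_empty]


lemma scalar_key {k₀ μ ε t S a b d cR : ℝ} (hk₀ : 0 < k₀) (hμ : 0 < μ) (hε : 0 ≤ ε)
    (ht : 0 ≤ t) (hS : 0 ≤ S) (ha : 0 ≤ a) (hb : 0 ≤ b) (hd : 0 ≤ d)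
    (ha2 : a ^ 2 ≤ μ * t) (hb2 : b ^ 2 ≤ k₀ * S) (hdb : d ≤ ε * b)
    (hcR : cR = (k₀ * (1 + ε ^ 2) + μ
        + Real.sqrt ((k₀ * (1 + ε ^ 2) - μ) ^ 2 + 4 * μ * k₀ * ε ^ 2)) / 2) :
    (a + d) ^ 2 + b ^ 2 ≤ cR * (t + S) := by
  set p := μ with hp
  set r := k₀ * (1 + ε ^ 2) with hr
  set D := Real.sqrt ((r - p) ^ 2 + 4 * μ * k₀ * ε ^ 2) with hD
  have harg : 0 ≤ (r - p) ^ 2 + 4 * μ * k₀ * ε ^ 2 := by positivity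
  have hD2 : D ^ 2 = (r - p) ^ 2 + 4 * μ * k₀ * ε ^ 2 := Real.sq_sqrt harg
  have hDabs : |r - p| ≤ D := by
    rw [← Real.sqrt_sq_eq_abs]
    exact Real.sqrt_le_sqrt (le_add_of_nonneg_right (by positivity))
  have hcR' : cR = (r + p + D) / 2 := by rw [hcR]
  have habs1 : p - r ≤ D := by
    have := le_abs_self (p - r)
    rw [abs_sub_comm] at this
    linarith [this, hDabs]
  have habs2 : r - p ≤ D := le_trans (le_abs_self _) hDabs
  have hcp : 0 ≤ cR - p := by rw [hcR']; linarith
  have hcr : 0 ≤ cR - r := by rw [hcR']; linarith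
  have hq : (cR - p) * (cR - r) = μ * k₀ * ε ^ 2 := by
    rw [hcR']; linear_combination hD2 / 4
  -- AM–GM step
  set u := Real.sqrt ((cR - p) * t) with hu
  set v := Real.sqrt ((cR - r) * S) with hv
  have hu2 : u ^ 2 = (cR - p) * t := Real.sq_sqrt (mul_nonneg hcp ht)
  have hv2 : v ^ 2 = (cR - r) * S := Real.sq_sqrt (mul_nonneg hcr hS)
  have huv : u * v = ε * Real.sqrt (μ * k₀) * (Real.sqrt t * Real.sqrt S) := by
    rw [hu, hv, ← Real.sqrt_mul (mul_nonneg hcp ht)]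
    have : (cR - p) * t * ((cR - r) * S) = ε ^ 2 * (μ * k₀) * (t * S) := by
      linear_combination (t * S) * hq
    rw [this, Real.sqrt_mul (by positivity), Real.sqrt_mul (by positivity),
      Real.sqrt_sq hε, Real.sqrt_mul ht]
  have key : 2 * (ε * Real.sqrt (μ * k₀)) * (Real.sqrt t * Real.sqrt S)
      ≤ (cR - p) * t + (cR - r) * S := by
    linarith [sq_nonneg (u - v), hu2, hv2, huv, sq_abs (u-v)]
  -- bounds on a and b
  have hat : a ≤ Real.sqrt μ * Real.sqrt t := by
    have h1 : a = Real.sqrt (a ^ 2) := (Real.sqrt_sq ha).symm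
    rw [h1, ← Real.sqrt_mul hμ.le]
    exact Real.sqrt_le_sqrt ha2
  have hbt : b ≤ Real.sqrt k₀ * Real.sqrt S := by
    have h1 : b = Real.sqrt (b ^ 2) := (Real.sqrt_sq hb).symm
    rw [h1, ← Real.sqrt_mul hk₀.le]
    exact Real.sqrt_le_sqrt hb2
  have hab : a * b ≤ Real.sqrt (μ * k₀) * (Real.sqrt t * Real.sqrt S) := by
    have := mul_le_mul hat hbt hb (by positivity)
    calc a * b ≤ Real.sqrt μ * Real.sqrt t * (Real.sqrt k₀ * Real.sqrt S) := this
      _ = Real.sqrt μ * Real.sqrt k₀ * (Real.sqrt t * Real.sqrt S) := by ring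
      _ = Real.sqrt (μ * k₀) * (Real.sqrt t * Real.sqrt S) := by
          rw [Real.sqrt_mul hμ.le]
  have step1 : (a + d) ^ 2 + b ^ 2 ≤ (a + ε * b) ^ 2 + b ^ 2 := by
    have h1 : a + d ≤ a + ε * b := by linarith
    have h2 : (a + d) ^ 2 ≤ (a + ε * b) ^ 2 := by
      apply pow_le_pow_left₀ (by linarith) h1
    linarith
  have step2 : (a + ε * b) ^ 2 + b ^ 2
      ≤ p * t + 2 * (ε * Real.sqrt (μ * k₀)) * (Real.sqrt t * Real.sqrt S) + r * S := by
    have h2ab : 2 * ε * (a * b) ≤ 2 * ε * (Real.sqrt (μ * k₀) * (Real.sqrt t * Real.sqrt S)) :=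
      mul_le_mul_of_nonneg_left hab (by positivity)
    have heb : ε ^ 2 * b ^ 2 ≤ ε ^ 2 * (k₀ * S) := mul_le_mul_of_nonneg_left hb2 (sq_nonneg ε)
    calc (a + ε * b) ^ 2 + b ^ 2
        = a ^ 2 + 2 * ε * (a * b) + ε ^ 2 * b ^ 2 + b ^ 2 := by ring
      _ ≤ p * t + 2 * ε * (Real.sqrt (μ * k₀) * (Real.sqrt t * Real.sqrt S))
          + ε ^ 2 * (k₀ * S) + k₀ * S := by linarith [ha2, hb2, h2ab, heb]
      _ = p * t + 2 * (ε * Real.sqrt (μ * k₀)) * (Real.sqrt t * Real.sqrt S) + r * S := by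
          rw [hr]; ring
  have step3 : p * t + 2 * (ε * Real.sqrt (μ * k₀)) * (Real.sqrt t * Real.sqrt S) + r * S
      ≤ cR * (t + S) := by
    have hex : (cR - p) * t + (cR - r) * S = cR * (t + S) - p * t - r * S := by ring
    linarith [key]
  linarith [step1, step2, step3]

lemma mulVecDot {n m : ℕ} (Z : Matrix (Fin n) (Fin m) ℝ) (y : Fin m → ℝ) (u : Fin n → ℝ) :
    (Z *ᵥ y) ⬝ᵥ u = y ⬝ᵥ (Zᵀ *ᵥ u) := by
  rw [dotProduct_comm (Z *ᵥ y) u, Matrix.dotProduct_mulVec, ← Matrix.mulVec_transpose,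
    dotProduct_comm]

lemma ip_add {n : ℕ} {A : Matrix (Fin n) (Fin n) ℝ} (hs : Aᵀ = A) (x y : Fin n → ℝ) :
    (A *ᵥ (x + y)) ⬝ᵥ (x + y)
      = (A *ᵥ x) ⬝ᵥ x + 2 * ((A *ᵥ x) ⬝ᵥ y) + (A *ᵥ y) ⬝ᵥ y := by
  have h := ipSymm hs x y
  simp only [mulVec_add, dotProduct_add, add_dotProduct]
  linarith [h]

lemma coarse_ortho {n m : ℕ} {A : Matrix (Fin n) (Fin n) ℝ} {Z : Matrix (Fin n) (Fin m) ℝ}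
    (hinv : (Zᵀ * A * Z) * (Zᵀ * A * Z)⁻¹ = 1) :
    Zᵀ * A * (1 - Z * (Zᵀ * A * Z)⁻¹ * Zᵀ * A) = 0 := by
  rw [Matrix.mul_sub, Matrix.mul_one, sub_eq_zero]
  calc Zᵀ * A = (Zᵀ * A * Z) * (Zᵀ * A * Z)⁻¹ * (Zᵀ * A) := by rw [hinv, Matrix.one_mul]
    _ = Zᵀ * A * (Z * (Zᵀ * A * Z)⁻¹ * Zᵀ * A) := by simp only [Matrix.mul_assoc]


/-- Continuity estimate for the GenEO preconditioner with inexact coarse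
solve: under the `k₀`-bound on sums of locally supported vectors and
`⟨E u, u⟩ ≤ μ ⟨Ẽ u, u⟩`, for all `U₀, (U_i)`,
`‖Z U₀ + (I − P̃₀) ∑ R_iᵀ U_i‖_A² ≤ c_R (⟨Ẽ U₀, U₀⟩ + ∑ ⟨R_i A R_iᵀ U_i, U_i⟩)` where
`c_R = [k₀(1+ε_A²) + μ + √((k₀(1+ε_A²) − μ)² + 4 μ k₀ ε_A²)]/2`, `ε_A = ‖P₀ − P̃₀‖_A`. -/
theorem stmt6 {n m N : ℕ} (A : Matrix (Fin n) (Fin n) ℝ) (hA : A.PosDef)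
    (Z : Matrix (Fin n) (Fin m) ℝ) (hZ : LinearIndependent ℝ Zᵀ)
    (Et : Matrix (Fin m) (Fin m) ℝ) (hEt : Et.PosDef)
    (nd : Fin N → ℕ) (R : ∀ i : Fin N, Matrix (Fin (nd i)) (Fin n) ℝ)
    (k₀ μ : ℝ) (hk₀ : 0 < k₀) (hμ : 0 < μ)
    (hk₀bound : ∀ U : ∀ i : Fin N, Fin (nd i) → ℝ,
      (A *ᵥ (∑ i, (R i)ᵀ *ᵥ U i)) ⬝ᵥ (∑ i, (R i)ᵀ *ᵥ U i)
        ≤ k₀ * ∑ i, (A *ᵥ ((R i)ᵀ *ᵥ U i)) ⬝ᵥ ((R i)ᵀ *ᵥ U i))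
    (hEμ : ∀ u : Fin m → ℝ, ((Zᵀ * A * Z) *ᵥ u) ⬝ᵥ u ≤ μ * ((Et *ᵥ u) ⬝ᵥ u))
    (εA cR : ℝ)
    (hεA : εA = aOpNorm A (Z * (Zᵀ * A * Z)⁻¹ * Zᵀ * A - Z * Et⁻¹ * Zᵀ * A))
    (hcR : cR = (k₀ * (1 + εA ^ 2) + μ
        + Real.sqrt ((k₀ * (1 + εA ^ 2) - μ) ^ 2 + 4 * μ * k₀ * εA ^ 2)) / 2) :
    ∀ (U₀ : Fin m → ℝ) (U : ∀ i : Fin N, Fin (nd i) → ℝ),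
      (A *ᵥ (Z *ᵥ U₀ + (1 - Z * Et⁻¹ * Zᵀ * A) *ᵥ (∑ i, (R i)ᵀ *ᵥ U i))) ⬝ᵥ
          (Z *ᵥ U₀ + (1 - Z * Et⁻¹ * Zᵀ * A) *ᵥ (∑ i, (R i)ᵀ *ᵥ U i))
        ≤ cR * ((Et *ᵥ U₀) ⬝ᵥ U₀ + ∑ i, ((R i * A * (R i)ᵀ) *ᵥ U i) ⬝ᵥ U i) := by
  intro U₀ U
  have hs : Aᵀ = A := by have := hA.1.eq; rwa [conjTranspose_eq_transpose_of_trivial] at this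
  -- `Z` has injective `mulVec`
  have hZx : ∀ x : Fin m → ℝ, x ≠ 0 → Z *ᵥ x ≠ 0 := by
    intro x hx hcon
    apply hx
    have hsum : ∑ i, x i • Zᵀ i = Z *ᵥ x := by
      funext j
      simp only [Finset.sum_apply, Pi.smul_apply, smul_eq_mul, mulVec, dotProduct,
        transpose_apply]
      exact Finset.sum_congr rfl fun i _ => mul_comm _ _
    have hall := Fintype.linearIndependent_iff.mp hZ x (by rw [hsum, hcon])
    funext i; exact hall i
  -- `E = Zᵀ A Z` is positive definite, hence invertible
  have hEpd : (Zᵀ * A * Z).PosDef := by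
    refine Matrix.PosDef.of_dotProduct_mulVec_pos ?_ ?_
    · have := isHermitian_conjTranspose_mul_mul Z hA.1
      rwa [conjTranspose_eq_transpose_of_trivial] at this
    · intro x hx
      have h := hA.dotProduct_mulVec_pos (hZx x hx)
      have he : star x ⬝ᵥ ((Zᵀ * A * Z) *ᵥ x) = star (Z *ᵥ x) ⬝ᵥ (A *ᵥ (Z *ᵥ x)) := by
        simp only [star_trivial]
        rw [← mulVec_mulVec, ← mulVec_mulVec, ← mulVecDot Z x (A *ᵥ (Z *ᵥ x)),
          dotProduct_comm]
      rw [he]; exact h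
  have hEdet : IsUnit (Zᵀ * A * Z).det := isUnit_iff_isUnit_det _ |>.1 hEpd.isUnit
  have hEEi : (Zᵀ * A * Z) * (Zᵀ * A * Z)⁻¹ = 1 := mul_nonsing_inv _ hEdet
  have horth : Zᵀ * A * (1 - Z * (Zᵀ * A * Z)⁻¹ * Zᵀ * A) = 0 := coarse_ortho hEEi
  -- abbreviations
  set w : Fin n → ℝ := ∑ i, (R i)ᵀ *ᵥ U i with hw
  set Md : Matrix (Fin n) (Fin n) ℝ :=
    Z * (Zᵀ * A * Z)⁻¹ * Zᵀ * A - Z * Et⁻¹ * Zᵀ * A with hMd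
  set q : Fin n → ℝ := (1 - Z * (Zᵀ * A * Z)⁻¹ * Zᵀ * A) *ᵥ w with hq
  -- orthogonality of q to range of Z in the A-inner product
  have hAq : Zᵀ *ᵥ (A *ᵥ q) = 0 := by
    rw [hq, mulVec_mulVec, mulVec_mulVec, horth, zero_mulVec]
  have hqZ : ∀ y : Fin m → ℝ, (A *ᵥ (Z *ᵥ y)) ⬝ᵥ q = 0 := by
    intro y
    rw [ipSymm hs (Z *ᵥ y) q, dotProduct_comm, mulVecDot Z y (A *ᵥ q), hAq, dotProduct_zero]
  set vv : Fin m → ℝ :=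
    U₀ + (((Zᵀ * A * Z)⁻¹ * (Zᵀ * A)) *ᵥ w - (Et⁻¹ * (Zᵀ * A)) *ᵥ w) with hvv
  have hy1 : Z *ᵥ vv = Z *ᵥ U₀ + Md *ᵥ w := by
    rw [hvv, hMd]
    simp only [mulVec_add, mulVec_sub, mulVec_mulVec, sub_mulVec, Matrix.mul_assoc]
  have hXeq : Z *ᵥ U₀ + (1 - Z * Et⁻¹ * Zᵀ * A) *ᵥ w = Z *ᵥ vv + q := by
    rw [hy1, hq, hMd]
    simp only [sub_mulVec, one_mulVec]
    abel
  have hwdec : w = Z *ᵥ (((Zᵀ * A * Z)⁻¹ * (Zᵀ * A)) *ᵥ w) + q := by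
    rw [hq]
    simp only [mulVec_mulVec, sub_mulVec, one_mulVec, Matrix.mul_assoc]
    abel
  -- split of the left-hand side
  have hsplit : (A *ᵥ (Z *ᵥ U₀ + (1 - Z * Et⁻¹ * Zᵀ * A) *ᵥ w)) ⬝ᵥ
      (Z *ᵥ U₀ + (1 - Z * Et⁻¹ * Zᵀ * A) *ᵥ w)
      = (A *ᵥ (Z *ᵥ vv)) ⬝ᵥ (Z *ᵥ vv) + (A *ᵥ q) ⬝ᵥ q := by
    rw [hXeq, ip_add hs (Z *ᵥ vv) q, hqZ vv]
    ring
  -- abbreviations for the scalar argument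
  set a : ℝ := aNorm A (Z *ᵥ U₀) with ha
  set b : ℝ := aNorm A w with hb
  set d : ℝ := aNorm A (Md *ᵥ w) with hd
  set t : ℝ := (Et *ᵥ U₀) ⬝ᵥ U₀ with ht
  set S : ℝ := ∑ i, ((R i * A * (R i)ᵀ) *ᵥ U i) ⬝ᵥ U i with hS
  have ha0 : 0 ≤ a := aNorm_nonneg _ _
  have hb0 : 0 ≤ b := aNorm_nonneg _ _
  have hd0 : 0 ≤ d := aNorm_nonneg _ _
  have ht0 : 0 ≤ t := ipNonneg hEt.posSemidef U₀
  -- identification of the local terms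
  have hterm : ∀ i, ((R i * A * (R i)ᵀ) *ᵥ U i) ⬝ᵥ U i
      = (A *ᵥ ((R i)ᵀ *ᵥ U i)) ⬝ᵥ ((R i)ᵀ *ᵥ U i) := by
    intro i
    rw [← mulVec_mulVec, ← mulVec_mulVec, mulVecDot (R i) _ (U i), dotProduct_comm]
  have hS0 : 0 ≤ S := by
    rw [hS]
    exact Finset.sum_nonneg fun i _ => by
      rw [hterm i]; exact ipNonneg hA.posSemidef _
  -- quadratic bounds
  have ha2 : a ^ 2 ≤ μ * t := by
    rw [ha, sq_aNorm hA.posSemidef]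
    have h := hEμ U₀
    have he : ((Zᵀ * A * Z) *ᵥ U₀) ⬝ᵥ U₀ = (A *ᵥ (Z *ᵥ U₀)) ⬝ᵥ (Z *ᵥ U₀) := by
      rw [← mulVec_mulVec, ← mulVec_mulVec, mulVecDot Zᵀ _ U₀, transpose_transpose,
        dotProduct_comm]
    rw [← he]; exact h
  have hb2 : b ^ 2 ≤ k₀ * S := by
    rw [hb, sq_aNorm hA.posSemidef, hS]
    have h := hk₀bound U
    rw [← hw] at h
    calc (A *ᵥ w) ⬝ᵥ w ≤ k₀ * ∑ i, (A *ᵥ ((R i)ᵀ *ᵥ U i)) ⬝ᵥ ((R i)ᵀ *ᵥ U i) := h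
      _ = k₀ * ∑ i, ((R i * A * (R i)ᵀ) *ᵥ U i) ⬝ᵥ U i := by
          congr 1
          exact Finset.sum_congr rfl fun i _ => (hterm i).symm
  have hdb : d ≤ εA * b := by
    rw [hd, hb, hεA]
    exact ((aOpNorm_spec hA Md).1 w)
  have hε0 : 0 ≤ εA := by rw [hεA]; exact (aOpNorm_spec hA Md).2
  -- the two pieces of the split
  have hpiece1 : (A *ᵥ (Z *ᵥ vv)) ⬝ᵥ (Z *ᵥ vv) ≤ (a + d) ^ 2 := by
    rw [← sq_aNorm hA.posSemidef]
    have htri : aNorm A (Z *ᵥ vv) ≤ a + d := by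
      rw [hy1, ha, hd]
      exact aNorm_add_le hA.posSemidef _ _
    exact pow_le_pow_left₀ (aNorm_nonneg _ _) htri 2
  have hpiece2 : (A *ᵥ q) ⬝ᵥ q ≤ b ^ 2 := by
    rw [hb, sq_aNorm hA.posSemidef]
    have hw2 : (A *ᵥ w) ⬝ᵥ w
        = (A *ᵥ (Z *ᵥ (((Zᵀ * A * Z)⁻¹ * (Zᵀ * A)) *ᵥ w))) ⬝ᵥ
            (Z *ᵥ (((Zᵀ * A * Z)⁻¹ * (Zᵀ * A)) *ᵥ w)) + (A *ᵥ q) ⬝ᵥ q := by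
      conv_lhs => rw [hwdec]
      rw [ip_add hs _ q, hqZ]
      ring
    have hpos := ipNonneg hA.posSemidef (Z *ᵥ (((Zᵀ * A * Z)⁻¹ * (Zᵀ * A)) *ᵥ w))
    linarith
  -- conclude with the scalar eigenvalue estimate
  have hfinal := scalar_key hk₀ hμ hε0 ht0 hS0 ha0 hb0 hd0 ha2 hb2 hdb hcR
  calc (A *ᵥ (Z *ᵥ U₀ + (1 - Z * Et⁻¹ * Zᵀ * A) *ᵥ w)) ⬝ᵥ
      (Z *ᵥ U₀ + (1 - Z * Et⁻¹ * Zᵀ * A) *ᵥ w)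
      = (A *ᵥ (Z *ᵥ vv)) ⬝ᵥ (Z *ᵥ vv) + (A *ᵥ q) ⬝ᵥ q := hsplit
    _ ≤ (a + d) ^ 2 + b ^ 2 := add_le_add hpiece1 hpiece2
    _ ≤ cR * (t + S) := hfinal
end

section
/- (Stable decomposition bound for GenEO with inexact coarse solve) Assume: ∑_{i=1}^N R_iᵀ D_i R_i = I (partition of unity); ‖∑_{i=1}^N R_iᵀ U_i‖_A² ≤ k₀ ∑_{i=1}^N ‖R_iᵀ U_i‖_A² for all U_i ∈ ℝ^{n_i}; and, for given linear maps π̃_j : ℝ^{n_j} → ℝ^{n_j}, the inequality ∑_{j=1}^N ⟨R_j A R_jᵀ D_j (I − π̃_j) R_j U, D_j (I − π̃_j) R_j U⟩ ≤ k₁ τ ⟨A U, U⟩ holds for all U ∈ ℝⁿ. Let ε_A := ‖P₀ − P̃₀‖_A and define F U := P₀ U + (P̃₀ − P₀) ∑_{j=1}^N R_jᵀ D_j (I − π̃_j) R_j U. Then for all U ∈ ℝⁿ: ⟨A (F U), F U⟩ ≤ (1 + ε_A √(k₀ k₁ τ))² ⟨A U, U⟩. -/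
open Matrix

namespace Stmt7Aux

lemma dot_self_nonneg {k : ℕ} (v : Fin k → ℝ) : 0 ≤ v ⬝ᵥ v :=
  Finset.sum_nonneg fun _ _ => mul_self_nonneg _

lemma cs_sq {k : ℕ} (v w : Fin k → ℝ) : (v ⬝ᵥ w) ^ 2 ≤ (v ⬝ᵥ v) * (w ⬝ᵥ w) := by
  have := Finset.sum_mul_sq_le_sq_mul_sq Finset.univ v w
  simpa only [dotProduct, pow_two] using this

lemma cs {k : ℕ} (v w : Fin k → ℝ) :
    v ⬝ᵥ w ≤ Real.sqrt (v ⬝ᵥ v) * Real.sqrt (w ⬝ᵥ w) := by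
  calc v ⬝ᵥ w ≤ |v ⬝ᵥ w| := le_abs_self _
    _ = Real.sqrt ((v ⬝ᵥ w) ^ 2) := (Real.sqrt_sq_eq_abs _).symm
    _ ≤ Real.sqrt ((v ⬝ᵥ v) * (w ⬝ᵥ w)) := Real.sqrt_le_sqrt (cs_sq v w)
    _ = _ := Real.sqrt_mul (dot_self_nonneg v) _

lemma tri {k : ℕ} (u v : Fin k → ℝ) :
    Real.sqrt ((u + v) ⬝ᵥ (u + v)) ≤ Real.sqrt (u ⬝ᵥ u) + Real.sqrt (v ⬝ᵥ v) := by
  have h1 := cs u v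
  have h3 : Real.sqrt (u ⬝ᵥ u) ^ 2 = u ⬝ᵥ u := Real.sq_sqrt (dot_self_nonneg u)
  have h4 : Real.sqrt (v ⬝ᵥ v) ^ 2 = v ⬝ᵥ v := Real.sq_sqrt (dot_self_nonneg v)
  have h2 : (u + v) ⬝ᵥ (u + v) = u ⬝ᵥ u + 2 * (u ⬝ᵥ v) + v ⬝ᵥ v := by
    simp only [add_dotProduct, dotProduct_add, dotProduct_comm v u]; ring
  have h5 : (u + v) ⬝ᵥ (u + v) ≤ (Real.sqrt (u ⬝ᵥ u) + Real.sqrt (v ⬝ᵥ v)) ^ 2 := by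
    nlinarith [h1, h3, h4]
  calc Real.sqrt ((u + v) ⬝ᵥ (u + v))
      ≤ Real.sqrt ((Real.sqrt (u ⬝ᵥ u) + Real.sqrt (v ⬝ᵥ v)) ^ 2) := Real.sqrt_le_sqrt h5
    _ = _ := Real.sqrt_sq (by positivity)

lemma dmm {a b c : ℕ} (X : Matrix (Fin a) (Fin b) ℝ) (Y : Matrix (Fin a) (Fin c) ℝ)
    (u : Fin b → ℝ) (v : Fin c → ℝ) :
    (X *ᵥ u) ⬝ᵥ (Y *ᵥ v) = ((Yᵀ * X) *ᵥ u) ⬝ᵥ v := by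
  rw [Matrix.dotProduct_mulVec, ← Matrix.mulVec_transpose, Matrix.mulVec_mulVec]

lemma frob {k l : ℕ} (Nm : Matrix (Fin k) (Fin l) ℝ) (x : Fin l → ℝ) :
    (Nm *ᵥ x) ⬝ᵥ (Nm *ᵥ x) ≤ (∑ i, ∑ j, (Nm i j) ^ 2) * (x ⬝ᵥ x) := by
  have h : ∀ i, (Nm *ᵥ x) i * (Nm *ᵥ x) i ≤ (∑ j, (Nm i j) ^ 2) * (x ⬝ᵥ x) := by
    intro i
    have h0 : (Nm *ᵥ x) i = Nm i ⬝ᵥ x := rfl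
    have h2 : Nm i ⬝ᵥ Nm i = ∑ j, (Nm i j) ^ 2 := by
      simp [dotProduct, pow_two]
    rw [h0, ← pow_two, ← h2]
    exact cs_sq (Nm i) x
  calc (Nm *ᵥ x) ⬝ᵥ (Nm *ᵥ x) = ∑ i, (Nm *ᵥ x) i * (Nm *ᵥ x) i := rfl
    _ ≤ ∑ i, (∑ j, (Nm i j) ^ 2) * (x ⬝ᵥ x) := Finset.sum_le_sum fun i _ => h i
    _ = (∑ i, ∑ j, (Nm i j) ^ 2) * (x ⬝ᵥ x) := (Finset.sum_mul _ _ _).symm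

variable {n : ℕ} {A : Matrix (Fin n) (Fin n) ℝ}

lemma aNorm_nonneg (A : Matrix (Fin n) (Fin n) ℝ) (x : Fin n → ℝ) : 0 ≤ aNorm A x :=
  Real.sqrt_nonneg _

lemma aNorm_pos (hA : A.PosDef) {x : Fin n → ℝ} (hx : x ≠ 0) : 0 < aNorm A x := by
  apply Real.sqrt_pos.mpr
  have := hA.dotProduct_mulVec_pos hx
  simpa [dotProduct_comm] using this

lemma adot_nonneg (hA : A.PosDef) (x : Fin n → ℝ) : 0 ≤ (A *ᵥ x) ⬝ᵥ x := by
  have := hA.posSemidef.dotProduct_mulVec_nonneg x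
  simpa [dotProduct_comm] using this

lemma aNorm_sq (hA : A.PosDef) (x : Fin n → ℝ) : aNorm A x ^ 2 = (A *ᵥ x) ⬝ᵥ x :=
  Real.sq_sqrt (adot_nonneg hA x)

open scoped MatrixOrder in
lemma exists_sqrt (hA : A.PosDef) :
    ∃ B : Matrix (Fin n) (Fin n) ℝ,
      (∀ x y : Fin n → ℝ, (A *ᵥ x) ⬝ᵥ y = (B *ᵥ x) ⬝ᵥ (B *ᵥ y)) ∧ B⁻¹ * B = 1 := by
  refine ⟨CFC.sqrt A, ?_, ?_⟩
  · have hBB : CFC.sqrt A * CFC.sqrt A = A := CFC.sqrt_mul_sqrt_self A hA.posSemidef.nonneg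
    have hBsym : (CFC.sqrt A)ᵀ = CFC.sqrt A := by
      have h := (CFC.sqrt_nonneg A).posSemidef.1
      rwa [Matrix.IsHermitian, conjTranspose_eq_transpose_of_trivial] at h
    intro x y
    rw [dmm, hBsym, hBB]
  · have hBB : CFC.sqrt A * CFC.sqrt A = A := CFC.sqrt_mul_sqrt_self A hA.posSemidef.nonneg
    have hdA := hA.det_pos
    have hB0 : (CFC.sqrt A).det ≠ 0 := by
      intro h
      rw [← hBB, Matrix.det_mul, h, mul_zero] at hdA
      exact lt_irrefl 0 hdA
    exact Matrix.nonsing_inv_mul _ (isUnit_iff_ne_zero.mpr hB0)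

lemma acs (hA : A.PosDef) (x y : Fin n → ℝ) :
    (A *ᵥ x) ⬝ᵥ y ≤ aNorm A x * aNorm A y := by
  obtain ⟨B, hkey, -⟩ := exists_sqrt hA
  have hx : aNorm A x = Real.sqrt ((B *ᵥ x) ⬝ᵥ (B *ᵥ x)) := by rw [aNorm, hkey]
  have hy : aNorm A y = Real.sqrt ((B *ᵥ y) ⬝ᵥ (B *ᵥ y)) := by rw [aNorm, hkey]
  rw [hkey, hx, hy]
  exact cs _ _

lemma aNorm_add_le (hA : A.PosDef) (x y : Fin n → ℝ) :
    aNorm A (x + y) ≤ aNorm A x + aNorm A y := by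
  obtain ⟨B, hkey, -⟩ := exists_sqrt hA
  have h : ∀ z : Fin n → ℝ, aNorm A z = Real.sqrt ((B *ᵥ z) ⬝ᵥ (B *ᵥ z)) := fun z => by
    rw [aNorm, hkey]
  rw [h, h, h, Matrix.mulVec_add]
  exact tri _ _

lemma aNorm_neg (A : Matrix (Fin n) (Fin n) ℝ) (x : Fin n → ℝ) :
    aNorm A (-x) = aNorm A x := by
  simp [aNorm, Matrix.mulVec_neg, dotProduct_neg, neg_dotProduct]

lemma aOpNorm_nonneg (A M : Matrix (Fin n) (Fin n) ℝ) : 0 ≤ aOpNorm A M := by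
  apply Real.sSup_nonneg
  rintro t ⟨x, hx, rfl⟩
  exact div_nonneg (aNorm_nonneg _ _) (aNorm_nonneg _ _)

lemma aNorm_mulVec_le (hA : A.PosDef) (M : Matrix (Fin n) (Fin n) ℝ) (x : Fin n → ℝ) :
    aNorm A (M *ᵥ x) ≤ aOpNorm A M * aNorm A x := by
  obtain ⟨B, hkey, hBi⟩ := exists_sqrt hA
  have hnorm : ∀ z : Fin n → ℝ, aNorm A z = Real.sqrt ((B *ᵥ z) ⬝ᵥ (B *ᵥ z)) := fun z => by
    rw [aNorm, hkey]
  set F₁ : ℝ := ∑ i, ∑ j, ((B * M) i j) ^ 2 with hF₁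
  set F₂ : ℝ := ∑ i, ∑ j, ((B⁻¹) i j) ^ 2 with hF₂
  have hF₁0 : 0 ≤ F₁ := Finset.sum_nonneg fun _ _ => Finset.sum_nonneg fun _ _ => sq_nonneg _
  have hF₂0 : 0 ≤ F₂ := Finset.sum_nonneg fun _ _ => Finset.sum_nonneg fun _ _ => sq_nonneg _
  have pointwise : ∀ z : Fin n → ℝ, aNorm A (M *ᵥ z) ≤ Real.sqrt (F₁ * F₂) * aNorm A z := by
    intro z
    have h1 : (B *ᵥ (M *ᵥ z)) ⬝ᵥ (B *ᵥ (M *ᵥ z)) = ((B * M) *ᵥ z) ⬝ᵥ ((B * M) *ᵥ z) := by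
      rw [Matrix.mulVec_mulVec]
    have h2 : ((B * M) *ᵥ z) ⬝ᵥ ((B * M) *ᵥ z) ≤ F₁ * (z ⬝ᵥ z) := frob _ _
    have h3 : z = B⁻¹ *ᵥ (B *ᵥ z) := by rw [Matrix.mulVec_mulVec, hBi, Matrix.one_mulVec]
    have h4 : z ⬝ᵥ z ≤ F₂ * ((B *ᵥ z) ⬝ᵥ (B *ᵥ z)) := by
      calc z ⬝ᵥ z = (B⁻¹ *ᵥ (B *ᵥ z)) ⬝ᵥ (B⁻¹ *ᵥ (B *ᵥ z)) := by rw [← h3]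
        _ ≤ F₂ * ((B *ᵥ z) ⬝ᵥ (B *ᵥ z)) := frob _ _
    have h5 : (B *ᵥ (M *ᵥ z)) ⬝ᵥ (B *ᵥ (M *ᵥ z)) ≤ F₁ * F₂ * ((B *ᵥ z) ⬝ᵥ (B *ᵥ z)) := by
      rw [h1, mul_assoc]
      exact h2.trans (mul_le_mul_of_nonneg_left h4 hF₁0)
    rw [hnorm, hnorm]
    calc Real.sqrt ((B *ᵥ (M *ᵥ z)) ⬝ᵥ (B *ᵥ (M *ᵥ z)))
        ≤ Real.sqrt (F₁ * F₂ * ((B *ᵥ z) ⬝ᵥ (B *ᵥ z))) := Real.sqrt_le_sqrt h5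
      _ = Real.sqrt (F₁ * F₂) * Real.sqrt ((B *ᵥ z) ⬝ᵥ (B *ᵥ z)) :=
          Real.sqrt_mul (mul_nonneg hF₁0 hF₂0) _
  by_cases hx : x = 0
  · subst hx
    have : aNorm A (0 : Fin n → ℝ) = 0 := by simp [aNorm]
    rw [Matrix.mulVec_zero, this, mul_zero]
  · have hbdd : BddAbove { t : ℝ | ∃ z : Fin n → ℝ, z ≠ 0 ∧ t = aNorm A (M *ᵥ z) / aNorm A z } := by
      refine ⟨Real.sqrt (F₁ * F₂), ?_⟩
      rintro t ⟨z, hz, rfl⟩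
      rw [div_le_iff₀ (aNorm_pos hA hz)]
      exact pointwise z
    have hmem : aNorm A (M *ᵥ x) / aNorm A x ∈
        { t : ℝ | ∃ z : Fin n → ℝ, z ≠ 0 ∧ t = aNorm A (M *ᵥ z) / aNorm A z } := ⟨x, hx, rfl⟩
    have := le_csSup hbdd hmem
    rw [div_le_iff₀ (aNorm_pos hA hx)] at this
    exact this.trans_eq rfl


lemma proj_bound {n m : ℕ} (A : Matrix (Fin n) (Fin n) ℝ) (hA : A.PosDef)
    (Z : Matrix (Fin n) (Fin m) ℝ) (hZ : LinearIndependent ℝ Zᵀ) (U : Fin n → ℝ) :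
    aNorm A ((Z * (Zᵀ * A * Z)⁻¹ * Zᵀ * A) *ᵥ U) ≤ aNorm A U := by
  have hAsym : Aᵀ = A := by
    have h := hA.1
    rwa [Matrix.IsHermitian, conjTranspose_eq_transpose_of_trivial] at h
  set E := Zᵀ * A * Z with hEdef
  have hZinj : ∀ x : Fin m → ℝ, Z *ᵥ x = 0 → x = 0 := by
    intro x h
    have hsum : Z *ᵥ x = ∑ j, x j • Zᵀ j := by
      ext i
      simp [Matrix.mulVec, dotProduct, Matrix.transpose_apply, mul_comm]
    have := Fintype.linearIndependent_iff.mp hZ x (by rw [← hsum]; exact h)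
    funext j; exact this j
  have hE_pd : E.PosDef := by
    refine Matrix.PosDef.of_dotProduct_mulVec_pos ?_ ?_
    · show Eᴴ = E
      rw [conjTranspose_eq_transpose_of_trivial, hEdef]
      simp [Matrix.transpose_mul, Matrix.transpose_transpose, hAsym, Matrix.mul_assoc]
    · intro x hx
      have hZx : Z *ᵥ x ≠ 0 := fun h => hx (hZinj x h)
      have hpos := hA.dotProduct_mulVec_pos hZx
      have hEx : E *ᵥ x = Zᵀ *ᵥ (A *ᵥ (Z *ᵥ x)) := by
        rw [hEdef, Matrix.mulVec_mulVec, Matrix.mulVec_mulVec]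
      rw [hEx]
      have hst : star x = x := by funext j; simp
      rw [hst, Matrix.dotProduct_mulVec, Matrix.vecMul_transpose]
      simpa [star_trivial] using hpos
  have hdetE : IsUnit E.det := isUnit_iff_ne_zero.mpr (ne_of_gt hE_pd.det_pos)
  have hEl : E⁻¹ * E = 1 := Matrix.nonsing_inv_mul E hdetE
  have hEsym : Eᵀ = E := by
    rw [hEdef]
    simp [Matrix.transpose_mul, Matrix.transpose_transpose, hAsym, Matrix.mul_assoc]
  have hEinvsym : E⁻¹ᵀ = E⁻¹ := by
    rw [Matrix.transpose_nonsing_inv, hEsym]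
  set P := Z * E⁻¹ * Zᵀ * A with hPdef
  have hPt : Pᵀ = A * Z * E⁻¹ * Zᵀ := by
    rw [hPdef]
    simp only [Matrix.transpose_mul, Matrix.transpose_transpose, hAsym, hEinvsym,
      Matrix.mul_assoc]
  have hproj : Pᵀ * A * P = A * P := by
    have e1 : Pᵀ * A * P = A * Z * (E⁻¹ * E * E⁻¹) * (Zᵀ * A) := by
      rw [hPt, hPdef, hEdef]
      simp only [Matrix.mul_assoc]
    rw [e1, hEl, Matrix.one_mul, hPdef]
    simp only [Matrix.mul_assoc]
  have hd : (A *ᵥ (P *ᵥ U)) ⬝ᵥ (P *ᵥ U) = (A *ᵥ (P *ᵥ U)) ⬝ᵥ U := by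
    simp only [Matrix.mulVec_mulVec]
    rw [dmm (A * P) P U U, ← Matrix.mul_assoc, hproj]
  have h1 : aNorm A (P *ᵥ U) ^ 2 ≤ aNorm A (P *ᵥ U) * aNorm A U := by
    rw [aNorm_sq hA, hd]
    exact acs hA _ _
  rcases (aNorm_nonneg A (P *ᵥ U)).eq_or_lt with h | h
  · rw [← h]; exact aNorm_nonneg A U
  · rw [pow_two] at h1
    exact le_of_mul_le_mul_left h1 h

end Stmt7Aux

/-- Stable decomposition bound for GenEO with inexact coarse solve:
with partition of unity `∑ R_iᵀ D_i R_i = I`, the `k₀`-bound, and the GenEO bound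
`∑_j ⟨R_j A R_jᵀ D_j (I − π̃_j) R_j U, D_j (I − π̃_j) R_j U⟩ ≤ k₁ τ ⟨A U, U⟩`, setting
`F U := P₀ U + (P̃₀ − P₀) ∑_j R_jᵀ D_j (I − π̃_j) R_j U` and `ε_A := ‖P₀ − P̃₀‖_A`,
one has `⟨A (F U), F U⟩ ≤ (1 + ε_A √(k₀ k₁ τ))² ⟨A U, U⟩` for all `U`. -/
theorem stmt7 {n m N : ℕ} (A : Matrix (Fin n) (Fin n) ℝ) (hA : A.PosDef)
    (Z : Matrix (Fin n) (Fin m) ℝ) (hZ : LinearIndependent ℝ Zᵀ)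
    (Et : Matrix (Fin m) (Fin m) ℝ) (hEt : Et.PosDef)
    (nd : Fin N → ℕ)
    (R : ∀ i : Fin N, Matrix (Fin (nd i)) (Fin n) ℝ)
    (D : ∀ i : Fin N, Matrix (Fin (nd i)) (Fin (nd i)) ℝ)
    (hD : ∀ i, (D i).IsDiag)
    (k₀ k₁ τ : ℝ) (hk₀ : 0 < k₀) (hk₁ : 0 < k₁) (hτ : 0 < τ)
    (hPOU : ∑ i, (R i)ᵀ * D i * R i = (1 : Matrix (Fin n) (Fin n) ℝ))
    (hk₀bound : ∀ U : ∀ i : Fin N, Fin (nd i) → ℝ,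
      (A *ᵥ (∑ i, (R i)ᵀ *ᵥ U i)) ⬝ᵥ (∑ i, (R i)ᵀ *ᵥ U i)
        ≤ k₀ * ∑ i, (A *ᵥ ((R i)ᵀ *ᵥ U i)) ⬝ᵥ ((R i)ᵀ *ᵥ U i))
    (π : ∀ j : Fin N, Matrix (Fin (nd j)) (Fin (nd j)) ℝ)
    (hGenEO : ∀ U : Fin n → ℝ,
      ∑ j, ((R j * A * (R j)ᵀ) *ᵥ ((D j) *ᵥ ((1 - π j) *ᵥ ((R j) *ᵥ U)))) ⬝ᵥ
          ((D j) *ᵥ ((1 - π j) *ᵥ ((R j) *ᵥ U)))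
        ≤ k₁ * τ * ((A *ᵥ U) ⬝ᵥ U))
    (εA : ℝ)
    (hεA : εA = aOpNorm A (Z * (Zᵀ * A * Z)⁻¹ * Zᵀ * A - Z * Et⁻¹ * Zᵀ * A)) :
    ∀ U : Fin n → ℝ,
      (A *ᵥ ((Z * (Zᵀ * A * Z)⁻¹ * Zᵀ * A) *ᵥ U
            + (Z * Et⁻¹ * Zᵀ * A - Z * (Zᵀ * A * Z)⁻¹ * Zᵀ * A) *ᵥ
              (∑ j, (R j)ᵀ *ᵥ ((D j) *ᵥ ((1 - π j) *ᵥ ((R j) *ᵥ U)))))) ⬝ᵥ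
          ((Z * (Zᵀ * A * Z)⁻¹ * Zᵀ * A) *ᵥ U
            + (Z * Et⁻¹ * Zᵀ * A - Z * (Zᵀ * A * Z)⁻¹ * Zᵀ * A) *ᵥ
              (∑ j, (R j)ᵀ *ᵥ ((D j) *ᵥ ((1 - π j) *ᵥ ((R j) *ᵥ U)))))
        ≤ (1 + εA * Real.sqrt (k₀ * k₁ * τ)) ^ 2 * ((A *ᵥ U) ⬝ᵥ U) := by
  intro U
  have hεA0 : 0 ≤ εA := by rw [hεA]; exact Stmt7Aux.aOpNorm_nonneg A _
  set E := Zᵀ * A * Z with hEdef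
  set P := Z * E⁻¹ * Zᵀ * A with hPdef
  set Pt := Z * Et⁻¹ * Zᵀ * A with hPtdef
  set w := ∑ j, (R j)ᵀ *ᵥ ((D j) *ᵥ ((1 - π j) *ᵥ ((R j) *ᵥ U))) with hwdef
  have hP : aNorm A (P *ᵥ U) ≤ aNorm A U := by
    have h := Stmt7Aux.proj_bound A hA Z hZ U
    rw [← hEdef, ← hPdef] at h
    exact h
  have hMw : aNorm A ((Pt - P) *ᵥ w) ≤ εA * aNorm A w := by
    have h := Stmt7Aux.aNorm_mulVec_le hA (P - Pt) w
    rw [← hεA] at h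
    have hneg : (Pt - P) *ᵥ w = -((P - Pt) *ᵥ w) := by
      rw [Matrix.sub_mulVec, Matrix.sub_mulVec, neg_sub]
    rw [hneg, Stmt7Aux.aNorm_neg]
    exact h
  have hw2 : (A *ᵥ w) ⬝ᵥ w ≤ k₀ * k₁ * τ * ((A *ᵥ U) ⬝ᵥ U) := by
    have ha := hk₀bound fun i => (D i) *ᵥ ((1 - π i) *ᵥ ((R i) *ᵥ U))
    rw [← hwdef] at ha
    have hb : ∀ i : Fin N,
        (A *ᵥ ((R i)ᵀ *ᵥ (D i *ᵥ ((1 - π i) *ᵥ (R i *ᵥ U))))) ⬝ᵥ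
            ((R i)ᵀ *ᵥ (D i *ᵥ ((1 - π i) *ᵥ (R i *ᵥ U))))
          = ((R i * A * (R i)ᵀ) *ᵥ (D i *ᵥ ((1 - π i) *ᵥ (R i *ᵥ U)))) ⬝ᵥ
            (D i *ᵥ ((1 - π i) *ᵥ (R i *ᵥ U))) := by
      intro i
      rw [Matrix.mulVec_mulVec, Stmt7Aux.dmm, Matrix.transpose_transpose, ← Matrix.mul_assoc]
    have hsum : (∑ i, (A *ᵥ ((R i)ᵀ *ᵥ (D i *ᵥ ((1 - π i) *ᵥ (R i *ᵥ U))))) ⬝ᵥ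
            ((R i)ᵀ *ᵥ (D i *ᵥ ((1 - π i) *ᵥ (R i *ᵥ U)))))
        = ∑ j, ((R j * A * (R j)ᵀ) *ᵥ ((D j) *ᵥ ((1 - π j) *ᵥ ((R j) *ᵥ U)))) ⬝ᵥ
            ((D j) *ᵥ ((1 - π j) *ᵥ ((R j) *ᵥ U))) :=
      Finset.sum_congr rfl fun i _ => hb i
    rw [hsum] at ha
    have h2 := mul_le_mul_of_nonneg_left (hGenEO U) hk₀.le
    nlinarith [ha, h2]
  have hw : aNorm A w ≤ Real.sqrt (k₀ * k₁ * τ) * aNorm A U := by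
    have h1 : aNorm A w = Real.sqrt ((A *ᵥ w) ⬝ᵥ w) := rfl
    have h2 : aNorm A U = Real.sqrt ((A *ᵥ U) ⬝ᵥ U) := rfl
    rw [h1, h2, ← Real.sqrt_mul (by positivity : (0:ℝ) ≤ k₀ * k₁ * τ)]
    exact Real.sqrt_le_sqrt hw2
  have hG : aNorm A (P *ᵥ U + (Pt - P) *ᵥ w)
      ≤ (1 + εA * Real.sqrt (k₀ * k₁ * τ)) * aNorm A U := by
    have h2 : εA * aNorm A w ≤ εA * (Real.sqrt (k₀ * k₁ * τ) * aNorm A U) :=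
      mul_le_mul_of_nonneg_left hw hεA0
    calc aNorm A (P *ᵥ U + (Pt - P) *ᵥ w)
        ≤ aNorm A (P *ᵥ U) + aNorm A ((Pt - P) *ᵥ w) := Stmt7Aux.aNorm_add_le hA _ _
      _ ≤ aNorm A U + εA * (Real.sqrt (k₀ * k₁ * τ) * aNorm A U) :=
          add_le_add hP (hMw.trans h2)
      _ = (1 + εA * Real.sqrt (k₀ * k₁ * τ)) * aNorm A U := by ring
  calc (A *ᵥ (P *ᵥ U + (Pt - P) *ᵥ w)) ⬝ᵥ (P *ᵥ U + (Pt - P) *ᵥ w)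
      = aNorm A (P *ᵥ U + (Pt - P) *ᵥ w) ^ 2 := (Stmt7Aux.aNorm_sq hA _).symm
    _ ≤ ((1 + εA * Real.sqrt (k₀ * k₁ * τ)) * aNorm A U) ^ 2 :=
        pow_le_pow_left₀ (Stmt7Aux.aNorm_nonneg A _) hG 2
    _ = (1 + εA * Real.sqrt (k₀ * k₁ * τ)) ^ 2 * (aNorm A U ^ 2) := by ring
    _ = (1 + εA * Real.sqrt (k₀ * k₁ * τ)) ^ 2 * ((A *ᵥ U) ⬝ᵥ U) := by
        rw [Stmt7Aux.aNorm_sq hA U]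
end

section
/- Let A be a symmetric positive semidefinite and B a symmetric positive definite n×n real matrix. Let (U_k)_{k=1,…,n} be a basis of ℝⁿ with ⟨B U_k, U_l⟩ = 0 for k ≠ l and A U_k = λ_k B U_k for real numbers λ_k. Let τ > 0, V_τ := span{ U_k : λ_k < τ }, let W be any subspace of ℝⁿ, and let p be the B-orthogonal projection onto V_τ + W. Then for all U ∈ ℝⁿ: τ ⟨B (I − p) U, (I − p) U⟩ ≤ ⟨A (I − p) U, (I − p) U⟩. -/
open Matrix

/-- Let `A` be symmetric positive semidefinite, `B` SPD, `(U_k)` a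
`B`-orthogonal basis of generalized eigenvectors (`A U_k = λ_k B U_k`), `τ > 0`,
`V_τ := span{U_k : λ_k < τ}`, `W` any subspace, and `p` the `B`-orthogonal projection onto
`V_τ + W`.  Then `τ ⟨B (I − p) U, (I − p) U⟩ ≤ ⟨A (I − p) U, (I − p) U⟩` for all `U`. -/
theorem stmt11 {n : ℕ} (A B : Matrix (Fin n) (Fin n) ℝ)
    (hA : A.PosSemidef) (hB : B.PosDef)
    (U : Fin n → (Fin n → ℝ))
    (hUindep : LinearIndependent ℝ U)
    (hUspan : Submodule.span ℝ (Set.range U) = ⊤)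
    (lam : Fin n → ℝ)
    (hBorth : ∀ k l, k ≠ l → (B *ᵥ U k) ⬝ᵥ U l = 0)
    (heig : ∀ k, A *ᵥ U k = lam k • (B *ᵥ U k))
    (τ : ℝ) (hτ : 0 < τ)
    (W : Submodule ℝ (Fin n → ℝ))
    (p : Matrix (Fin n) (Fin n) ℝ)
    (hpmem : ∀ u : Fin n → ℝ,
      p *ᵥ u ∈ Submodule.span ℝ (U '' {k | lam k < τ}) ⊔ W)
    (hpid : ∀ v ∈ Submodule.span ℝ (U '' {k | lam k < τ}) ⊔ W, p *ᵥ v = v)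
    (hporth : ∀ u : Fin n → ℝ, ∀ v ∈ Submodule.span ℝ (U '' {k | lam k < τ}) ⊔ W,
      (B *ᵥ (u - p *ᵥ u)) ⬝ᵥ v = 0) :
    ∀ u : Fin n → ℝ,
      τ * ((B *ᵥ ((1 - p) *ᵥ u)) ⬝ᵥ ((1 - p) *ᵥ u))
        ≤ (A *ᵥ ((1 - p) *ᵥ u)) ⬝ᵥ ((1 - p) *ᵥ u) := by
  intro u
  classical
  have hw1 : (1 - p) *ᵥ u = u - p *ᵥ u := by
    rw [Matrix.sub_mulVec, Matrix.one_mulVec]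
  rw [hw1]
  set w : Fin n → ℝ := u - p *ᵥ u with hwdef
  let b : Module.Basis (Fin n) ℝ (Fin n → ℝ) := Module.Basis.mk hUindep (by rw [hUspan])
  set c : Fin n → ℝ := fun k => b.repr w k with hc
  have hbk : ∀ k, b k = U k := fun k => Module.Basis.mk_apply hUindep _ k
  have hwsum : w = ∑ k, c k • U k := by
    conv_lhs => rw [← b.sum_repr w]
    exact Finset.sum_congr rfl fun k _ => by rw [hbk]
  set d : Fin n → ℝ := fun k => (B *ᵥ U k) ⬝ᵥ U k with hd
  have hdpos : ∀ k, 0 < d k := fun k => by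
    show 0 < (B *ᵥ U k) ⬝ᵥ U k
    rw [dotProduct_comm]
    simpa using hB.dotProduct_mulVec_pos (hUindep.ne_zero k)
  have hsumdot : ∀ (f : Fin n → (Fin n → ℝ)) (v : Fin n → ℝ),
      (∑ k, f k) ⬝ᵥ v = ∑ k, f k ⬝ᵥ v := by
    intro f v
    simp only [dotProduct, Finset.sum_apply, Finset.sum_mul]
    exact Finset.sum_comm
  have hdotsum : ∀ (v : Fin n → ℝ) (f : Fin n → (Fin n → ℝ)),
      v ⬝ᵥ (∑ k, f k) = ∑ k, v ⬝ᵥ f k := by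
    intro v f
    simp only [dotProduct, Finset.sum_apply, Finset.mul_sum]
    exact Finset.sum_comm
  have hmvs : ∀ (M : Matrix (Fin n) (Fin n) ℝ) (g : Fin n → (Fin n → ℝ)),
      M *ᵥ (∑ k, g k) = ∑ k, M *ᵥ g k := fun M g => by
    rw [← Matrix.mulVecLin_apply, map_sum]
    simp [Matrix.mulVecLin_apply]
  have hexp : ∀ M : Matrix (Fin n) (Fin n) ℝ,
      (M *ᵥ w) ⬝ᵥ w = ∑ k, ∑ l, c k * c l * ((M *ᵥ U k) ⬝ᵥ U l) := by
    intro M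
    conv_lhs => rw [hwsum, hmvs, hsumdot]
    refine Finset.sum_congr rfl fun k _ => ?_
    rw [hdotsum]
    refine Finset.sum_congr rfl fun l _ => ?_
    rw [Matrix.mulVec_smul, smul_dotProduct, dotProduct_smul,
      smul_eq_mul, smul_eq_mul]
    ring
  have hBdot : ∀ k, (B *ᵥ w) ⬝ᵥ U k = c k * d k := by
    intro k
    conv_lhs => rw [hwsum, hmvs, hsumdot]
    simp only [Matrix.mulVec_smul, smul_dotProduct, smul_eq_mul]
    rw [Finset.sum_eq_single k]
    · exact fun l _ hlk => by rw [hBorth l k hlk, mul_zero]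
    · exact fun h => absurd (Finset.mem_univ k) h
  have hc0 : ∀ k, lam k < τ → c k = 0 := by
    intro k hk
    have hmem : U k ∈ Submodule.span ℝ (U '' {k | lam k < τ}) ⊔ W :=
      le_sup_left (α := Submodule ℝ (Fin n → ℝ))
        (Submodule.subset_span ⟨k, hk, rfl⟩)
    have h0 : (B *ᵥ w) ⬝ᵥ U k = 0 := hporth u (U k) hmem
    rw [hBdot k] at h0
    exact (mul_eq_zero.mp h0).resolve_right (ne_of_gt (hdpos k))
  have hBsum : (B *ᵥ w) ⬝ᵥ w = ∑ k, c k * c k * d k := by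
    rw [hexp B]
    refine Finset.sum_congr rfl fun k _ => ?_
    rw [Finset.sum_eq_single k]
    · exact fun l _ hlk => by rw [hBorth k l (Ne.symm hlk), mul_zero]
    · exact fun h => absurd (Finset.mem_univ k) h
  have hAsum : (A *ᵥ w) ⬝ᵥ w = ∑ k, lam k * (c k * c k * d k) := by
    rw [hexp A]
    refine Finset.sum_congr rfl fun k _ => ?_
    rw [Finset.sum_eq_single k]
    · rw [heig k, smul_dotProduct, smul_eq_mul]; ring
    · intro l _ hlk
      rw [heig k, smul_dotProduct, smul_eq_mul, hBorth k l (Ne.symm hlk)]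
      ring
    · exact fun h => absurd (Finset.mem_univ k) h
  rw [hBsum, hAsum, Finset.mul_sum]
  refine Finset.sum_le_sum fun k _ => ?_
  by_cases hk : lam k < τ
  · rw [hc0 k hk]; ring_nf; simp
  · push_neg at hk
    have hnn : 0 ≤ c k * c k * d k :=
      mul_nonneg (mul_self_nonneg _) (le_of_lt (hdpos k))
    exact mul_le_mul_of_nonneg_right hk hnn
end

section
/- Let A be a symmetric positive semidefinite and B a symmetric positive definite n×n real matrix. Let (U_k)_{k=1,…,n} be a basis of ℝⁿ with ⟨B U_k, U_l⟩ = 0 for k ≠ l and A U_k = λ_k B U_k for real numbers λ_k. Let γ > 0, V_γ := span{ U_k : λ_k > γ }, let W be any subspace of ℝⁿ, and let q be the B-orthogonal projection onto V_γ + W. Then for all U ∈ ℝⁿ: ⟨A (I − q) U, (I − q) U⟩ ≤ γ ⟨B (I − q) U, (I − q) U⟩. -/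
open Matrix

private lemma sum_dotProduct' {ι : Type*} (s : Finset ι) {n : ℕ} (f : ι → (Fin n → ℝ))
    (y : Fin n → ℝ) : (∑ i ∈ s, f i) ⬝ᵥ y = ∑ i ∈ s, f i ⬝ᵥ y := by
  simp only [dotProduct, Finset.sum_apply, Finset.sum_mul]
  exact Finset.sum_comm

private lemma dotProduct_sum' {ι : Type*} (s : Finset ι) {n : ℕ} (f : ι → (Fin n → ℝ))
    (y : Fin n → ℝ) : y ⬝ᵥ (∑ i ∈ s, f i) = ∑ i ∈ s, y ⬝ᵥ f i := by
  simp only [dotProduct, Finset.sum_apply, Finset.mul_sum]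
  exact Finset.sum_comm

private lemma mulVec_sum' {ι : Type*} (s : Finset ι) {n : ℕ} (M : Matrix (Fin n) (Fin n) ℝ)
    (f : ι → (Fin n → ℝ)) : M *ᵥ (∑ i ∈ s, f i) = ∑ i ∈ s, M *ᵥ f i := by
  have h := map_sum M.mulVecLin f s
  simpa only [Matrix.mulVecLin_apply] using h

/-- Let `A` be symmetric positive semidefinite, `B` SPD, `(U_k)` a
`B`-orthogonal basis of generalized eigenvectors (`A U_k = λ_k B U_k`), `γ > 0`,
`V_γ := span{U_k : λ_k > γ}`, `W` any subspace, and `q` the `B`-orthogonal projection onto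
`V_γ + W`.  Then `⟨A (I − q) U, (I − q) U⟩ ≤ γ ⟨B (I − q) U, (I − q) U⟩` for all `U`. -/
theorem stmt12 {n : ℕ} (A B : Matrix (Fin n) (Fin n) ℝ)
    (hA : A.PosSemidef) (hB : B.PosDef)
    (U : Fin n → (Fin n → ℝ))
    (hUindep : LinearIndependent ℝ U)
    (hUspan : Submodule.span ℝ (Set.range U) = ⊤)
    (lam : Fin n → ℝ)
    (hBorth : ∀ k l, k ≠ l → (B *ᵥ U k) ⬝ᵥ U l = 0)
    (heig : ∀ k, A *ᵥ U k = lam k • (B *ᵥ U k))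
    (γ : ℝ) (hγ : 0 < γ)
    (W : Submodule ℝ (Fin n → ℝ))
    (q : Matrix (Fin n) (Fin n) ℝ)
    (hpmem : ∀ u : Fin n → ℝ,
      q *ᵥ u ∈ Submodule.span ℝ (U '' {k | γ < lam k}) ⊔ W)
    (hpid : ∀ v ∈ Submodule.span ℝ (U '' {k | γ < lam k}) ⊔ W, q *ᵥ v = v)
    (hporth : ∀ u : Fin n → ℝ, ∀ v ∈ Submodule.span ℝ (U '' {k | γ < lam k}) ⊔ W,
      (B *ᵥ (u - q *ᵥ u)) ⬝ᵥ v = 0) :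
    ∀ u : Fin n → ℝ,
      (A *ᵥ ((1 - q) *ᵥ u)) ⬝ᵥ ((1 - q) *ᵥ u)
        ≤ γ * ((B *ᵥ ((1 - q) *ᵥ u)) ⬝ᵥ ((1 - q) *ᵥ u)) := by
  intro u
  set w : Fin n → ℝ := (1 - q) *ᵥ u with hwdef
  have hw : w = u - q *ᵥ u := by
    rw [hwdef, Matrix.sub_mulVec, Matrix.one_mulVec]
  -- basis
  let b : Module.Basis (Fin n) ℝ (Fin n → ℝ) := Module.Basis.mk hUindep (by rw [hUspan])
  have hbU : ∀ k, b k = U k := fun k => Module.Basis.mk_apply hUindep _ k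
  set c : Fin n → ℝ := fun k => b.repr w k with hc
  have hwsum : w = ∑ k, c k • U k := by
    conv_lhs => rw [← b.sum_repr w]
    exact Finset.sum_congr rfl fun k _ => by rw [hbU]
  -- positivity of diagonal B entries
  have hUne : ∀ k, U k ≠ 0 := fun k => hUindep.ne_zero k
  have hbpos : ∀ k, 0 < (B *ᵥ U k) ⬝ᵥ U k := by
    intro k
    have := hB.dotProduct_mulVec_pos (hUne k)
    simpa [dotProduct_comm] using this
  -- general expansion of M *ᵥ w ⬝ᵥ U k
  have hdotk : ∀ (M : Matrix (Fin n) (Fin n) ℝ) (k : Fin n),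
      (M *ᵥ w) ⬝ᵥ U k = ∑ l, c l * ((M *ᵥ U l) ⬝ᵥ U k) := by
    intro M k
    rw [hwsum, mulVec_sum' Finset.univ M (fun l => c l • U l), sum_dotProduct']
    refine Finset.sum_congr rfl fun l _ => ?_
    rw [Matrix.mulVec_smul, smul_dotProduct, smul_eq_mul]
  -- vanishing coefficients
  have hc0 : ∀ k, γ < lam k → c k = 0 := by
    intro k hk
    have hmem : U k ∈ Submodule.span ℝ (U '' {k | γ < lam k}) ⊔ W := by
      apply Submodule.mem_sup_left
      exact Submodule.subset_span ⟨k, hk, rfl⟩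
    have h0 : (B *ᵥ w) ⬝ᵥ U k = 0 := by rw [hw]; exact hporth u (U k) hmem
    rw [hdotk B k, Finset.sum_eq_single k
      (fun l _ hl => by rw [hBorth l k hl, mul_zero]) (by simp)] at h0
    rcases mul_eq_zero.mp h0 with h | h
    · exact h
    · exact absurd h (hbpos k).ne'
  -- expansions of the quadratic forms
  have hdot2 : ∀ x : Fin n → ℝ,
      x ⬝ᵥ w = ∑ k, c k * (x ⬝ᵥ U k) := by
    intro x
    conv_lhs => rw [hwsum]
    rw [dotProduct_sum' Finset.univ (fun k => c k • U k) x]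
    refine Finset.sum_congr rfl fun k _ => ?_
    rw [dotProduct_smul, smul_eq_mul]
  have hAexp : (A *ᵥ w) ⬝ᵥ w = ∑ k, lam k * (c k * c k * ((B *ᵥ U k) ⬝ᵥ U k)) := by
    rw [hdot2 (A *ᵥ w)]
    refine Finset.sum_congr rfl fun k _ => ?_
    rw [hdotk A k, Finset.sum_eq_single k
      (fun l _ hl => by rw [heig l, smul_dotProduct, smul_eq_mul, hBorth l k hl, mul_zero, mul_zero])
      (by simp)]
    rw [heig k, smul_dotProduct, smul_eq_mul]
    ring
  have hBexp : (B *ᵥ w) ⬝ᵥ w = ∑ k, c k * c k * ((B *ᵥ U k) ⬝ᵥ U k) := by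
    rw [hdot2 (B *ᵥ w)]
    refine Finset.sum_congr rfl fun k _ => ?_
    rw [hdotk B k, Finset.sum_eq_single k
      (fun l _ hl => by rw [hBorth l k hl, mul_zero]) (by simp)]
    ring
  rw [hAexp, hBexp, Finset.mul_sum]
  refine Finset.sum_le_sum fun k _ => ?_
  by_cases hk : γ < lam k
  · rw [hc0 k hk]; simp
  · push_neg at hk
    have hnn : 0 ≤ c k * c k * ((B *ᵥ U k) ⬝ᵥ U k) :=
      mul_nonneg (mul_self_nonneg _) (hbpos k).le
    exact mul_le_mul_of_nonneg_right hk hnn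
end

section
/- Let B be a symmetric positive definite n×n real matrix, V ⊆ ℝⁿ a subspace, ξ the B-orthogonal projection onto V, and W the B-orthogonal complement of V (so I − ξ is the B-orthogonal projection onto W). Define B† := (I − ξ) B⁻¹. Then B† maps W into W, and for all y, z ∈ W: ⟨B (B† y), z⟩ = ⟨y, z⟩. In other words, B† restricted to W is the inverse of the operator B_W : W → W defined by the Riesz representation (with respect to the Euclidean inner product on W) of the bilinear form (u,v) ↦ ⟨B u, v⟩ on W × W. -/
open Matrix

/-- Let `B` be SPD, `V` a subspace, `ξ` the `B`-orthogonal projection onto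
`V`, and `W := {w | ∀ v ∈ V, ⟨B w, v⟩ = 0}` the `B`-orthogonal complement of `V`.
Define `B† := (I − ξ) B⁻¹`.  Then `B†` maps `W` into `W`, and for all `y, z ∈ W`,
`⟨B (B† y), z⟩ = ⟨y, z⟩`, i.e. `B†` restricted to `W` inverts the operator on `W`
represented by the bilinear form `(u, v) ↦ ⟨B u, v⟩`. -/
theorem stmt13 {n : ℕ} (B : Matrix (Fin n) (Fin n) ℝ) (hB : B.PosDef)
    (V : Submodule ℝ (Fin n → ℝ))
    (ξ : Matrix (Fin n) (Fin n) ℝ)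
    (hξmem : ∀ u : Fin n → ℝ, ξ *ᵥ u ∈ V)
    (hξid : ∀ v ∈ V, ξ *ᵥ v = v)
    (hξorth : ∀ u : Fin n → ℝ, ∀ v ∈ V, (B *ᵥ (u - ξ *ᵥ u)) ⬝ᵥ v = 0) :
    (∀ y : Fin n → ℝ, (∀ v ∈ V, (B *ᵥ y) ⬝ᵥ v = 0) →
        ∀ v ∈ V, (B *ᵥ (((1 - ξ) * B⁻¹) *ᵥ y)) ⬝ᵥ v = 0)
    ∧ (∀ y z : Fin n → ℝ, (∀ v ∈ V, (B *ᵥ y) ⬝ᵥ v = 0) →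
        (∀ v ∈ V, (B *ᵥ z) ⬝ᵥ v = 0) →
        (B *ᵥ (((1 - ξ) * B⁻¹) *ᵥ y)) ⬝ᵥ z = y ⬝ᵥ z) := by
  have hdet : IsUnit B.det := isUnit_iff_ne_zero.mpr hB.det_pos.ne'
  have key : ∀ u : Fin n → ℝ, ((1 - ξ) * B⁻¹) *ᵥ u = B⁻¹ *ᵥ u - ξ *ᵥ (B⁻¹ *ᵥ u) := by
    intro u
    rw [← mulVec_mulVec, sub_mulVec, one_mulVec]
  constructor
  · intro y hy v hv
    rw [key]
    exact hξorth (B⁻¹ *ᵥ y) v hv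
  · intro y z hy hz
    rw [key, mulVec_sub, sub_dotProduct, mulVec_mulVec, mul_nonsing_inv B hdet,
      one_mulVec]
    have h1 : (B *ᵥ (ξ *ᵥ (B⁻¹ *ᵥ y))) ⬝ᵥ z = 0 := by
      have hsym : B = Bᵀ := (Matrix.IsHermitian.eq hB.1).symm
      calc (B *ᵥ (ξ *ᵥ (B⁻¹ *ᵥ y))) ⬝ᵥ z
          = (ξ *ᵥ (B⁻¹ *ᵥ y)) ⬝ᵥ (Bᵀ *ᵥ z) := by
            rw [dotProduct_mulVec, ← mulVec_transpose, ← hsym, dotProduct_comm]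
            rw [← hsym, dotProduct_comm]
        _ = (Bᵀ *ᵥ z) ⬝ᵥ (ξ *ᵥ (B⁻¹ *ᵥ y)) := dotProduct_comm _ _
        _ = 0 := by rw [← hsym]; exact hz _ (hξmem _)
    rw [h1, sub_zero]
end

section
/- (Continuity estimate for the GenEO-2 preconditioner with inexact coarse solve) Assume: ‖∑_{i=1}^N R_iᵀ V_i‖_A² ≤ k₀ ∑_{i=1}^N ‖R_iᵀ V_i‖_A² for all V_i ∈ ℝ^{n_i}; ⟨E u, u⟩ ≤ μ ⟨Ẽ u, u⟩ for all u ∈ ℝᵐ for some μ > 0; and for each i = 1,…,N, B_i is a symmetric positive definite n_i×n_i matrix, W_i ⊆ ℝ^{n_i} is a subspace, and ‖R_iᵀ D_i v‖_A² ≤ γ ⟨B_i v, v⟩ for all v ∈ W_i. Let ε_A := ‖P₀ − P̃₀‖_A and c_R := [ k₀ γ (1 + ε_A²) + μ + √( (k₀ γ (1 + ε_A²) − μ)² + 4 μ k₀ γ ε_A² ) ] / 2. Then for all U₀ ∈ ℝᵐ and all U_i ∈ W_i (i = 1,…,N): ‖Z U₀ + (I − P̃₀) ∑_{i=1}^N R_iᵀ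 D_i U_i‖_A² ≤ c_R ( ⟨Ẽ U₀, U₀⟩ + ∑_{i=1}^N ⟨B_i U_i, U_i⟩ ). -/
open Matrix

namespace Stmt15Aux

open scoped MatrixOrder

variable {n : ℕ}

lemma dot_self_nonneg (v : Fin n → ℝ) : 0 ≤ v ⬝ᵥ v :=
  Finset.sum_nonneg fun i _ => mul_self_nonneg _

lemma sqrt_dot_eq_norm (v : Fin n → ℝ) :
    Real.sqrt (v ⬝ᵥ v) = ‖(WithLp.equiv 2 (Fin n → ℝ)).symm v‖ := by
  rw [EuclideanSpace.norm_eq]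
  congr 1
  simp [dotProduct, Real.norm_eq_abs, sq_abs, sq]

lemma sqrt_dot_add_le (u v : Fin n → ℝ) :
    Real.sqrt ((u + v) ⬝ᵥ (u + v)) ≤ Real.sqrt (u ⬝ᵥ u) + Real.sqrt (v ⬝ᵥ v) := by
  rw [sqrt_dot_eq_norm, sqrt_dot_eq_norm, sqrt_dot_eq_norm]
  have : (WithLp.equiv 2 (Fin n → ℝ)).symm (u + v)
      = (WithLp.equiv 2 (Fin n → ℝ)).symm u + (WithLp.equiv 2 (Fin n → ℝ)).symm v := rfl
  rw [this]
  exact norm_add_le _ _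

set_option synthInstance.maxHeartbeats 1000000 in
lemma exists_opBound (T : Matrix (Fin n) (Fin n) ℝ) :
    ∃ C : ℝ, 0 ≤ C ∧ ∀ v : Fin n → ℝ,
      Real.sqrt ((T *ᵥ v) ⬝ᵥ (T *ᵥ v)) ≤ C * Real.sqrt (v ⬝ᵥ v) := by
  let f := LinearMap.toContinuousLinearMap (Matrix.toEuclideanLin T)
  refine ⟨‖f‖, norm_nonneg _, fun v => ?_⟩
  rw [sqrt_dot_eq_norm, sqrt_dot_eq_norm]
  have h := f.le_opNorm ((WithLp.equiv 2 (Fin n → ℝ)).symm v)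
  simpa [f] using h

variable {A : Matrix (Fin n) (Fin n) ℝ}

/-- symmetric dot identity -/
lemma dot_symm (hs : Aᵀ = A) (u v : Fin n → ℝ) :
    (A *ᵥ u) ⬝ᵥ v = u ⬝ᵥ (A *ᵥ v) := by
  rw [dotProduct_comm, dotProduct_mulVec, ← mulVec_transpose, hs, dotProduct_comm]

lemma dot_mulVec_left {m : ℕ} (Z : Matrix (Fin n) (Fin m) ℝ) (c : Fin m → ℝ) (r : Fin n → ℝ) :
    (Z *ᵥ c) ⬝ᵥ r = c ⬝ᵥ (Zᵀ *ᵥ r) := by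
  rw [dotProduct_comm, dotProduct_mulVec, ← mulVec_transpose, dotProduct_comm]

lemma dotA_nonneg (hA : A.PosDef) (x : Fin n → ℝ) : 0 ≤ (A *ᵥ x) ⬝ᵥ x := by
  have := hA.posSemidef.dotProduct_mulVec_nonneg x
  simpa [dotProduct_comm] using this

lemma aNorm_sq (hA : A.PosDef) (x : Fin n → ℝ) : aNorm A x ^ 2 = (A *ᵥ x) ⬝ᵥ x :=
  Real.sq_sqrt (dotA_nonneg hA x)

lemma aNorm_pos (hA : A.PosDef) {x : Fin n → ℝ} (hx : x ≠ 0) : 0 < aNorm A x := by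
  apply Real.sqrt_pos.2
  have := hA.dotProduct_mulVec_pos hx
  simpa [dotProduct_comm] using this

lemma transpose_eq (hA : A.PosDef) : Aᵀ = A :=
  (conjTranspose_eq_transpose_of_trivial A).symm.trans hA.1.eq

lemma aNorm_eq_sqrtS (hA : A.PosDef) (x : Fin n → ℝ) :
    aNorm A x = Real.sqrt ((CFC.sqrt A *ᵥ x) ⬝ᵥ (CFC.sqrt A *ᵥ x)) := by
  set S := CFC.sqrt A with hSdef
  have hs : Sᵀ = S :=
    (conjTranspose_eq_transpose_of_trivial S).symm.trans (CFC.sqrt_nonneg A).posSemidef.1.eq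
  unfold aNorm
  congr 1
  conv_lhs => rw [← CFC.sqrt_mul_sqrt_self A hA.posSemidef.nonneg, ← hSdef]
  rw [← mulVec_mulVec, dot_symm hs]

lemma pyth (hs : Aᵀ = A) {u v : Fin n → ℝ} (h : (A *ᵥ u) ⬝ᵥ v = 0) :
    (A *ᵥ (u + v)) ⬝ᵥ (u + v) = (A *ᵥ u) ⬝ᵥ u + (A *ᵥ v) ⬝ᵥ v := by
  have hvu : (A *ᵥ v) ⬝ᵥ u = 0 := by
    rw [dot_symm hs, dotProduct_comm]; exact h
  simp only [mulVec_add, add_dotProduct, dotProduct_add]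
  rw [show (A *ᵥ u) ⬝ᵥ v = 0 from h, show (A *ᵥ v) ⬝ᵥ u = 0 from hvu]
  ring

lemma aNorm_add_le (hA : A.PosDef) (u v : Fin n → ℝ) :
    aNorm A (u + v) ≤ aNorm A u + aNorm A v := by
  rw [aNorm_eq_sqrtS hA, aNorm_eq_sqrtS hA, aNorm_eq_sqrtS hA, mulVec_add]
  exact sqrt_dot_add_le _ _

lemma aNorm_mulVec_le (hA : A.PosDef) (M : Matrix (Fin n) (Fin n) ℝ) (x : Fin n → ℝ) :
    aNorm A (M *ᵥ x) ≤ aOpNorm A M * aNorm A x := by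
  by_cases hx : x = 0
  · simp [hx, aNorm]
  set S := CFC.sqrt A with hSdef
  have hSu : IsUnit S.det := by
    have hdet : S.det * S.det = A.det := by
      rw [← det_mul, CFC.sqrt_mul_sqrt_self A hA.posSemidef.nonneg]
    have : A.det ≠ 0 := ne_of_gt hA.det_pos
    refine isUnit_iff_ne_zero.2 fun h => this ?_
    rw [← hdet, h, mul_zero]
  obtain ⟨C, hC0, hC⟩ := exists_opBound (S * M * S⁻¹)
  have key : ∀ v : Fin n → ℝ, aNorm A (M *ᵥ v) ≤ C * aNorm A v := by
    intro v
    rw [aNorm_eq_sqrtS hA, aNorm_eq_sqrtS hA, ← hSdef]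
    have : S *ᵥ (M *ᵥ v) = (S * M * S⁻¹) *ᵥ (S *ᵥ v) := by
      rw [mulVec_mulVec, mulVec_mulVec, mul_assoc (S * M) S⁻¹ S, nonsing_inv_mul S hSu, mul_one]
    rw [this]
    exact hC _
  have hbdd : BddAbove { t : ℝ | ∃ y : Fin n → ℝ, y ≠ 0 ∧ t = aNorm A (M *ᵥ y) / aNorm A y } := by
    refine ⟨C, ?_⟩
    rintro t ⟨y, hy, rfl⟩
    rw [div_le_iff₀ (aNorm_pos hA hy)]
    exact key y
  have hmem : aNorm A (M *ᵥ x) / aNorm A x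
      ∈ { t : ℝ | ∃ y : Fin n → ℝ, y ≠ 0 ∧ t = aNorm A (M *ᵥ y) / aNorm A y } := ⟨x, hx, rfl⟩
  have := le_csSup hbdd hmem
  rw [div_le_iff₀ (aNorm_pos hA hx)] at this
  exact this

end Stmt15Aux

set_option maxHeartbeats 1000000 in
lemma stmt15_scalar (μ K ε cR a b s t : ℝ) (hμ : 0 < μ) (hK : 0 < K)
    (ha : 0 ≤ a) (hb : 0 ≤ b) (ha2 : a ^ 2 ≤ μ * s) (hb2 : b ^ 2 ≤ K * t)
    (hcR : cR = (K * (1 + ε ^ 2) + μ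
        + Real.sqrt ((K * (1 + ε ^ 2) - μ) ^ 2 + 4 * μ * K * ε ^ 2)) / 2) :
    (a + ε * b) ^ 2 + b ^ 2 ≤ cR * (s + t) := by
  have hΔ0 : (0:ℝ) ≤ (K * (1 + ε ^ 2) - μ) ^ 2 + 4 * μ * K * ε ^ 2 := by positivity
  obtain ⟨r, hrdef⟩ : ∃ r : ℝ,
      r = Real.sqrt ((K * (1 + ε ^ 2) - μ) ^ 2 + 4 * μ * K * ε ^ 2) := ⟨_, rfl⟩
  have hr2 : r ^ 2 = (K * (1 + ε ^ 2) - μ) ^ 2 + 4 * μ * K * ε ^ 2 := by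
    rw [hrdef]; exact Real.sq_sqrt hΔ0
  have hrd : |K * (1 + ε ^ 2) - μ| ≤ r := by
    rw [hrdef, ← Real.sqrt_sq_eq_abs]
    apply Real.sqrt_le_sqrt
    nlinarith [sq_nonneg ε, mul_pos hμ hK]
  have habs1 : K * (1 + ε ^ 2) - μ ≤ r := le_trans (le_abs_self _) hrd
  have habs2 : -(K * (1 + ε ^ 2) - μ) ≤ r := le_trans (neg_le_abs _) hrd
  have hcR' : cR = (K * (1 + ε ^ 2) + μ + r) / 2 := by rw [hcR, hrdef]
  have hP : 0 ≤ cR - μ := by rw [hcR']; linarith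
  have hQ : 0 ≤ cR - K * (1 + ε ^ 2) := by rw [hcR']; linarith
  have hPQ : (cR - μ) * (cR - K * (1 + ε ^ 2)) = μ * K * ε ^ 2 := by
    rw [hcR']; linear_combination hr2 / 4
  have hcRpos : 0 < cR := lt_of_lt_of_le hμ (by linarith)
  obtain ⟨X, hXdef⟩ : ∃ X : ℝ, X = K * (cR - μ) * a ^ 2 := ⟨_, rfl⟩
  obtain ⟨Y, hYdef⟩ : ∃ Y : ℝ, Y = μ * (cR - K * (1 + ε ^ 2)) * b ^ 2 := ⟨_, rfl⟩
  have hX0 : 0 ≤ X := by rw [hXdef]; positivity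
  have hY0 : 0 ≤ Y := by rw [hYdef]; positivity
  have hXY : X * Y = (μ * K * ε * a * b) ^ 2 := by
    rw [hXdef, hYdef]; linear_combination (μ * K * a ^ 2 * b ^ 2) * hPQ
  have key : 2 * (μ * K * ε * a * b) ≤ X + Y := by
    nlinarith [sq_nonneg (X - Y), hXY, hX0, hY0]
  have key' : 2 * (μ * K * ε * a * b)
      ≤ K * (cR - μ) * a ^ 2 + μ * (cR - K * (1 + ε ^ 2)) * b ^ 2 := by
    rw [← hXdef, ← hYdef]; exact key
  have f1 : cR * a ^ 2 ≤ cR * (μ * s) := mul_le_mul_of_nonneg_left ha2 hcRpos.le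
  have f2 : cR * b ^ 2 ≤ cR * (K * t) := mul_le_mul_of_nonneg_left hb2 hcRpos.le
  have f1' : K * (cR * a ^ 2) ≤ K * (cR * (μ * s)) := mul_le_mul_of_nonneg_left f1 hK.le
  have f2' : μ * (cR * b ^ 2) ≤ μ * (cR * (K * t)) := mul_le_mul_of_nonneg_left f2 hμ.le
  have hμK : 0 < μ * K := mul_pos hμ hK
  have main : (μ * K) * ((a + ε * b) ^ 2 + b ^ 2) ≤ (μ * K) * (cR * (s + t)) := by
    linarith [f1', f2', key']
  exact le_of_mul_le_mul_left main hμK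

open Stmt15Aux in
set_option maxHeartbeats 1000000 in
/-- Continuity estimate for the GenEO-2 preconditioner with inexact coarse
solve: under the `k₀`-bound, `⟨E u, u⟩ ≤ μ ⟨Ẽ u, u⟩`, and the local bounds
`‖R_iᵀ D_i v‖_A² ≤ γ ⟨B_i v, v⟩` for `v ∈ W_i`, for all `U₀` and `U_i ∈ W_i`,
`‖Z U₀ + (I − P̃₀) ∑ R_iᵀ D_i U_i‖_A² ≤ c_R (⟨Ẽ U₀, U₀⟩ + ∑ ⟨B_i U_i, U_i⟩)` with
`c_R = [k₀ γ (1+ε_A²) + μ + √((k₀ γ (1+ε_A²) − μ)² + 4 μ k₀ γ ε_A²)]/2`,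
`ε_A = ‖P₀ − P̃₀‖_A`. -/
theorem stmt15 {n m N : ℕ} (A : Matrix (Fin n) (Fin n) ℝ) (hA : A.PosDef)
    (Z : Matrix (Fin n) (Fin m) ℝ) (hZ : LinearIndependent ℝ Zᵀ)
    (Et : Matrix (Fin m) (Fin m) ℝ) (hEt : Et.PosDef)
    (nd : Fin N → ℕ)
    (R : ∀ i : Fin N, Matrix (Fin (nd i)) (Fin n) ℝ)
    (D : ∀ i : Fin N, Matrix (Fin (nd i)) (Fin (nd i)) ℝ)
    (hD : ∀ i, (D i).IsDiag)
    (k₀ μ γ : ℝ) (hk₀ : 0 < k₀) (hμ : 0 < μ) (hγ : 0 < γ)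
    (hk₀bound : ∀ V : ∀ i : Fin N, Fin (nd i) → ℝ,
      (A *ᵥ (∑ i, (R i)ᵀ *ᵥ V i)) ⬝ᵥ (∑ i, (R i)ᵀ *ᵥ V i)
        ≤ k₀ * ∑ i, (A *ᵥ ((R i)ᵀ *ᵥ V i)) ⬝ᵥ ((R i)ᵀ *ᵥ V i))
    (hEμ : ∀ u : Fin m → ℝ, ((Zᵀ * A * Z) *ᵥ u) ⬝ᵥ u ≤ μ * ((Et *ᵥ u) ⬝ᵥ u))
    (B : ∀ i : Fin N, Matrix (Fin (nd i)) (Fin (nd i)) ℝ)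
    (hB : ∀ i, (B i).PosDef)
    (W : ∀ i : Fin N, Submodule ℝ (Fin (nd i) → ℝ))
    (hγbound : ∀ i, ∀ v ∈ W i,
      (A *ᵥ ((R i)ᵀ *ᵥ ((D i) *ᵥ v))) ⬝ᵥ ((R i)ᵀ *ᵥ ((D i) *ᵥ v))
        ≤ γ * (((B i) *ᵥ v) ⬝ᵥ v))
    (εA cR : ℝ)
    (hεA : εA = aOpNorm A (Z * (Zᵀ * A * Z)⁻¹ * Zᵀ * A - Z * Et⁻¹ * Zᵀ * A))
    (hcR : cR = (k₀ * γ * (1 + εA ^ 2) + μ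
        + Real.sqrt ((k₀ * γ * (1 + εA ^ 2) - μ) ^ 2 + 4 * μ * k₀ * γ * εA ^ 2)) / 2) :
    ∀ (U₀ : Fin m → ℝ) (U : ∀ i : Fin N, Fin (nd i) → ℝ), (∀ i, U i ∈ W i) →
      (A *ᵥ (Z *ᵥ U₀
          + (1 - Z * Et⁻¹ * Zᵀ * A) *ᵥ (∑ i, (R i)ᵀ *ᵥ ((D i) *ᵥ U i)))) ⬝ᵥ
        (Z *ᵥ U₀
          + (1 - Z * Et⁻¹ * Zᵀ * A) *ᵥ (∑ i, (R i)ᵀ *ᵥ ((D i) *ᵥ U i)))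
        ≤ cR * ((Et *ᵥ U₀) ⬝ᵥ U₀ + ∑ i, ((B i) *ᵥ U i) ⬝ᵥ U i) := by
  intro U₀ U hU
  have hs : Aᵀ = A := transpose_eq hA
  -- E = Zᵀ A Z is positive definite
  have hZmul : ∀ x : Fin m → ℝ, x ≠ 0 → Z *ᵥ x ≠ 0 := by
    intro x hx hzx
    apply hx
    have hli := Fintype.linearIndependent_iff.mp hZ
    have hsum : ∑ j, x j • Zᵀ j = 0 := by
      rw [← hzx]
      ext i
      simp [mulVec, dotProduct, Finset.sum_apply, mul_comm]
    funext j
    exact hli x hsum j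
  have hE : (Zᵀ * A * Z).PosDef := by
    refine PosDef.of_dotProduct_mulVec_pos ?_ ?_
    · have h1 := (hA.posSemidef.conjTranspose_mul_mul_same Z).1
      rwa [conjTranspose_eq_transpose_of_trivial] at h1
    · intro x hx
      have h2 := hA.dotProduct_mulVec_pos (hZmul x hx)
      simp only [star_trivial] at h2 ⊢
      rw [← mulVec_mulVec, ← mulVec_mulVec, dotProduct_mulVec, vecMul_transpose]
      exact h2
  have hEu : IsUnit (Zᵀ * A * Z).det := isUnit_iff_ne_zero.2 (ne_of_gt hE.det_pos)
  have hEE : (Zᵀ * A * Z) * (Zᵀ * A * Z)⁻¹ = 1 := mul_nonsing_inv _ hEu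
  -- abbreviations
  set w : Fin n → ℝ := ∑ i, (R i)ᵀ *ᵥ ((D i) *ᵥ U i) with hw
  set g : Fin m → ℝ := Zᵀ *ᵥ (A *ᵥ w) with hg
  set P0w : Fin n → ℝ := Z *ᵥ ((Zᵀ * A * Z)⁻¹ *ᵥ g) with hP0w
  set q : Fin n → ℝ := w - P0w with hq
  set c : Fin m → ℝ := U₀ + ((Zᵀ * A * Z)⁻¹ *ᵥ g - Et⁻¹ *ᵥ g) with hc
  set z : Fin n → ℝ := Z *ᵥ c with hz
  -- basic reduction: Zᵀ (A (Z d)) = E d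
  have hEd : ∀ d : Fin m → ℝ, Zᵀ *ᵥ (A *ᵥ (Z *ᵥ d)) = (Zᵀ * A * Z) *ᵥ d := by
    intro d
    rw [mulVec_mulVec, mulVec_mulVec, Matrix.mul_assoc]
  -- q is A-orthogonal to range Z
  have hZAq : Zᵀ *ᵥ (A *ᵥ q) = 0 := by
    have h1 : Zᵀ *ᵥ (A *ᵥ P0w) = g := by
      rw [hP0w, hEd, mulVec_mulVec, hEE, one_mulVec]
    rw [hq, mulVec_sub, mulVec_sub, h1]
    simp [hg]
  have horth : ∀ d : Fin m → ℝ, (A *ᵥ (Z *ᵥ d)) ⬝ᵥ q = 0 := by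
    intro d
    rw [dot_symm hs, dot_mulVec_left, hZAq, dotProduct_zero]
  -- the vector decomposition
  have hdecomp : Z *ᵥ U₀ + (1 - Z * Et⁻¹ * Zᵀ * A) *ᵥ w = z + q := by
    have hTw : (Z * Et⁻¹ * Zᵀ * A) *ᵥ w = Z *ᵥ (Et⁻¹ *ᵥ g) := by
      rw [hg, mulVec_mulVec, mulVec_mulVec, mulVec_mulVec, Matrix.mul_assoc, Matrix.mul_assoc]
    rw [sub_mulVec, one_mulVec, hTw, hz, hc, hq, hP0w, mulVec_add, mulVec_sub]
    abel
  -- Pythagoras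
  have hpyth : (A *ᵥ (z + q)) ⬝ᵥ (z + q) = (A *ᵥ z) ⬝ᵥ z + (A *ᵥ q) ⬝ᵥ q :=
    pyth hs (horth c)
  -- ‖q‖² ≤ ‖w‖²
  have hwqP : (A *ᵥ w) ⬝ᵥ w = (A *ᵥ P0w) ⬝ᵥ P0w + (A *ᵥ q) ⬝ᵥ q := by
    have : w = P0w + q := by rw [hq]; abel
    rw [this] at *
    exact pyth hs (horth _)
  have hqw : (A *ᵥ q) ⬝ᵥ q ≤ (A *ᵥ w) ⬝ᵥ w := by
    have := dotA_nonneg hA P0w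
    linarith [hwqP]
  -- a and b
  set a : ℝ := aNorm A (Z *ᵥ U₀) with ha
  set b : ℝ := aNorm A w with hb
  have ha0 : 0 ≤ a := Real.sqrt_nonneg _
  have hb0 : 0 ≤ b := Real.sqrt_nonneg _
  have ha2 : a ^ 2 ≤ μ * ((Et *ᵥ U₀) ⬝ᵥ U₀) := by
    rw [ha, aNorm_sq hA]
    have h1 : (A *ᵥ (Z *ᵥ U₀)) ⬝ᵥ (Z *ᵥ U₀) = ((Zᵀ * A * Z) *ᵥ U₀) ⬝ᵥ U₀ := by
      rw [dot_symm hs, dot_mulVec_left, hEd, dotProduct_comm]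
    rw [h1]
    exact hEμ U₀
  have hb2 : b ^ 2 ≤ (k₀ * γ) * (∑ i, ((B i) *ᵥ U i) ⬝ᵥ U i) := by
    rw [hb, aNorm_sq hA, hw]
    calc (A *ᵥ (∑ i, (R i)ᵀ *ᵥ ((D i) *ᵥ U i))) ⬝ᵥ (∑ i, (R i)ᵀ *ᵥ ((D i) *ᵥ U i))
        ≤ k₀ * ∑ i, (A *ᵥ ((R i)ᵀ *ᵥ ((D i) *ᵥ U i))) ⬝ᵥ ((R i)ᵀ *ᵥ ((D i) *ᵥ U i)) :=
          hk₀bound (fun i => (D i) *ᵥ U i)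
      _ ≤ k₀ * ∑ i, γ * (((B i) *ᵥ U i) ⬝ᵥ U i) := by
          apply mul_le_mul_of_nonneg_left _ hk₀.le
          exact Finset.sum_le_sum fun i _ => hγbound i (U i) (hU i)
      _ = (k₀ * γ) * (∑ i, ((B i) *ᵥ U i) ⬝ᵥ U i) := by
          rw [← Finset.mul_sum]; ring
  -- ‖z‖ ≤ a + εA * b
  have hzdec : z = Z *ᵥ U₀ + (Z * (Zᵀ * A * Z)⁻¹ * Zᵀ * A - Z * Et⁻¹ * Zᵀ * A) *ᵥ w := by
    rw [hz, hc, hg, mulVec_add, mulVec_sub, sub_mulVec]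
    congr 1
    rw [mulVec_mulVec, mulVec_mulVec, mulVec_mulVec, mulVec_mulVec, mulVec_mulVec,
      mulVec_mulVec, Matrix.mul_assoc, Matrix.mul_assoc, Matrix.mul_assoc, Matrix.mul_assoc]
  have hznorm : aNorm A z ≤ a + εA * b := by
    rw [hzdec]
    refine le_trans (aNorm_add_le hA _ _) ?_
    have := aNorm_mulVec_le hA (Z * (Zᵀ * A * Z)⁻¹ * Zᵀ * A - Z * Et⁻¹ * Zᵀ * A) w
    rw [← hεA] at this
    rw [ha, hb]
    exact add_le_add le_rfl this
  have hzsq : (A *ᵥ z) ⬝ᵥ z ≤ (a + εA * b) ^ 2 := by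
    rw [← aNorm_sq hA]
    exact pow_le_pow_left₀ (Real.sqrt_nonneg _) hznorm 2
  -- conclude
  rw [hdecomp, hpyth]
  have hfinal := stmt15_scalar μ (k₀ * γ) εA cR a b ((Et *ᵥ U₀) ⬝ᵥ U₀)
    (∑ i, ((B i) *ᵥ U i) ⬝ᵥ U i) hμ (mul_pos hk₀ hγ) ha0 hb0 ha2 hb2 (by rw [hcR]; ring_nf)
  have hqb : (A *ᵥ q) ⬝ᵥ q ≤ b ^ 2 := by rw [hb, aNorm_sq hA]; exact hqw
  linarith [hzsq, hqb, hfinal]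
end
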